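/- Define Γ(C,x,y) = Σ_{F face of C} (-1)^{dim F} [A(F,C)](x) [F*](y). If y ∈ −relint(C*) or if x ∈ C, then Γ(C,x,y) = (-1)^{dim F₀} [C](x) [−relint C*](y), where F₀ is the minimal face of C. -/

import Mathlib

open scoped RealInnerProductSpace
open scoped Classical

noncomputable section

variable {V : Type*} [NormedAddCommGroup V] [InnerProductSpace ℝ V] [FiniteDimensional ℝ V]

/-- A polyhedral cone: a finite intersection of closed halfspaces through the origin. -/
def IsPolyCone (C : Set V) : Prop :=
  ∃ s : Finset V, C = ⋂ y ∈ s, {v : V | 0 ≤ ⟪v, y⟫}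

/-- `F` is a face of the cone `C`: `F = C ∩ H_y` for some `y` (possibly `0`) with `C ⊆ H_y⁺`. -/
def IsFaceOf (F C : Set V) : Prop :=
  ∃ y : V, C ⊆ {v : V | 0 ≤ ⟪v, y⟫} ∧ F = C ∩ {v : V | ⟪v, y⟫ = 0}

/-- Dimension of a set: the dimension of its linear span. -/
def sdim (S : Set V) : ℕ := Module.finrank ℝ (Submodule.span ℝ S)

/-- Dual cone. -/
def dualCone (C : Set V) : Set V := {v : V | ∀ c ∈ C, 0 ≤ ⟪v, c⟫}

/-- Angle cone `A(F, C) = { a • (x - z) : a > 0, x ∈ C, z ∈ relint F }`. -/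
def angleCone (F C : Set V) : Set V :=
  {w : V | ∃ a : ℝ, 0 < a ∧ ∃ x ∈ C, ∃ z ∈ intrinsicInterior ℝ F, w = a • (x - z)}

/-- Real-valued indicator function of a set. -/
def ind (S : Set V) : V → ℝ := S.indicator 1

/-- The `Γ` function: `Γ(C, x, y) = Σ_{F face of C} (-1)^(dim F) [A(F,C)](x) [F*](y)`. -/
def Γ (C : Set V) (x y : V) : ℝ :=
  ∑ᶠ F ∈ {F : Set V | IsFaceOf F C},
    (-1 : ℝ) ^ sdim F * ind (angleCone F C) x * ind (dualCone F) y

/-- `F₀` is the minimal face of `C`. -/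
def IsMinimalFace (F₀ C : Set V) : Prop :=
  IsFaceOf F₀ C ∧ ∀ F : Set V, IsFaceOf F C → F₀ ⊆ F

/-- A polyhedron: a finite intersection of translates of halfspaces. -/
def IsPolyhedron (P : Set V) : Prop :=
  ∃ s : Finset (V × ℝ), P = ⋂ p ∈ s, {v : V | p.2 ≤ ⟪v, p.1⟫}

set_option linter.unusedSectionVars false
set_option linter.unusedVariables false
set_option maxHeartbeats 1000000

/- ## Basic polyhedral cone machinery -/

def Ks (s : Finset V) : Set V := {v : V | ∀ t ∈ s, 0 ≤ ⟪v, t⟫}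

def perpS (T : Finset V) : Set V := {v : V | ∀ t ∈ T, ⟪v, t⟫ = 0}

def faceT (s T : Finset V) : Set V := Ks s ∩ perpS T

def TsF (s : Finset V) (F : Set V) : Finset V := s.filter (fun t => ∀ v ∈ F, ⟪v, t⟫ = 0)

def Fas (s : Finset V) : Finset (Set V) := s.powerset.image (faceT s)

lemma mem_Ks {s : Finset V} {v : V} : v ∈ Ks s ↔ ∀ t ∈ s, 0 ≤ ⟪v, t⟫ := Iff.rfl

lemma Ks_zero (s : Finset V) : (0 : V) ∈ Ks s := by
  intro t _; simp

lemma Ks_add {s : Finset V} {v w : V} (hv : v ∈ Ks s) (hw : w ∈ Ks s) : v + w ∈ Ks s := by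
  intro t ht
  rw [inner_add_left]
  exact add_nonneg (hv t ht) (hw t ht)

lemma Ks_smul {s : Finset V} {v : V} {a : ℝ} (ha : 0 ≤ a) (hv : v ∈ Ks s) : a • v ∈ Ks s := by
  intro t ht
  rw [real_inner_smul_left]
  exact mul_nonneg ha (hv t ht)

lemma Ks_anti {s s' : Finset V} (h : s ⊆ s') : Ks s' ⊆ Ks s := fun v hv t ht => hv t (h ht)

lemma perpS_zero (T : Finset V) : (0 : V) ∈ perpS T := by intro t _; simp

lemma perpS_add {T : Finset V} {v w : V} (hv : v ∈ perpS T) (hw : w ∈ perpS T) :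
    v + w ∈ perpS T := by
  intro t ht; rw [inner_add_left, hv t ht, hw t ht]; ring

lemma perpS_smul {T : Finset V} {v : V} (a : ℝ) (hv : v ∈ perpS T) : a • v ∈ perpS T := by
  intro t ht; rw [real_inner_smul_left, hv t ht]; ring

lemma perpS_neg {T : Finset V} {v : V} (hv : v ∈ perpS T) : -v ∈ perpS T := by
  intro t ht; rw [inner_neg_left, hv t ht]; ring

lemma perpS_sub {T : Finset V} {v w : V} (hv : v ∈ perpS T) (hw : w ∈ perpS T) :
    v - w ∈ perpS T := by
  rw [sub_eq_add_neg]; exact perpS_add hv (perpS_neg hw)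

lemma perpS_anti {T T' : Finset V} (h : T ⊆ T') : perpS T' ⊆ perpS T := fun v hv t ht => hv t (h ht)

lemma perpS_subset_Ks {T : Finset V} : perpS T ⊆ Ks T := fun v hv t ht => le_of_eq (hv t ht).symm

/-- the submodule with carrier `perpS T` -/
def pSub (T : Finset V) : Submodule ℝ V where
  carrier := perpS T
  add_mem' := perpS_add
  zero_mem' := perpS_zero T
  smul_mem' := fun a _ hv => perpS_smul a hv

lemma pSub_coe (T : Finset V) : (pSub T : Set V) = perpS T := rfl

lemma exists_pos_forall {α : Type*} (u : Finset α) (f : α → ℝ) (h : ∀ a ∈ u, 0 < f a) :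
    ∃ ε : ℝ, 0 < ε ∧ ∀ a ∈ u, ε ≤ f a := by
  classical
  induction u using Finset.induction_on with
  | empty => exact ⟨1, one_pos, by simp⟩
  | @insert a u ha ih =>
      obtain ⟨ε, hε, hεle⟩ := ih (fun b hb => h b (Finset.mem_insert_of_mem hb))
      refine ⟨min ε (f a), lt_min hε (h a (Finset.mem_insert_self a u)), ?_⟩
      intro b hb
      rcases Finset.mem_insert.1 hb with rfl | hb
      · exact min_le_right _ _
      · exact le_trans (min_le_left _ _) (hεle b hb)

lemma TsF_subset (s : Finset V) (F : Set V) : TsF s F ⊆ s := Finset.filter_subset _ _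

lemma mem_TsF {s : Finset V} {F : Set V} {t : V} :
    t ∈ TsF s F ↔ t ∈ s ∧ ∀ v ∈ F, ⟪v, t⟫ = 0 := by
  simp [TsF]

lemma TsF_anti {s : Finset V} {F F' : Set V} (h : F ⊆ F') : TsF s F' ⊆ TsF s F := by
  intro t ht
  rw [mem_TsF] at ht ⊢
  exact ⟨ht.1, fun v hv => ht.2 v (h hv)⟩

lemma faceT_subset_Ks {s T : Finset V} : faceT s T ⊆ Ks s := Set.inter_subset_left

lemma subset_perpS_TsF {s : Finset V} {F : Set V} : F ⊆ perpS (TsF s F) := by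
  intro v hv t ht
  exact (mem_TsF.1 ht).2 v hv

/-- every `faceT s T` with `T ⊆ s` is a face of `Ks s` -/
lemma faceT_isFace {s T : Finset V} (hT : T ⊆ s) : IsFaceOf (faceT s T) (Ks s) := by
  refine ⟨∑ t ∈ T, t, ?_, ?_⟩
  · intro v hv
    simp only [Set.mem_setOf_eq, inner_sum]
    exact Finset.sum_nonneg (fun t ht => hv t (hT ht))
  · ext v
    simp only [faceT, Set.mem_inter_iff, Set.mem_setOf_eq, inner_sum, perpS]
    constructor
    · rintro ⟨hv, hp⟩
      exact ⟨hv, Finset.sum_eq_zero (fun t ht => hp t ht)⟩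
    · rintro ⟨hv, hp⟩
      refine ⟨hv, ?_⟩
      intro t ht
      have := (Finset.sum_eq_zero_iff_of_nonneg (fun u hu => hv u (hT hu))).1 hp
      exact this t ht

lemma face_subset {s : Finset V} {F : Set V} (hF : IsFaceOf F (Ks s)) : F ⊆ Ks s := by
  obtain ⟨y, _, rfl⟩ := hF; exact Set.inter_subset_left

lemma face_zero {s : Finset V} {F : Set V} (hF : IsFaceOf F (Ks s)) : (0 : V) ∈ F := by
  obtain ⟨y, _, rfl⟩ := hF
  exact ⟨Ks_zero s, by simp⟩

lemma face_add {s : Finset V} {F : Set V} (hF : IsFaceOf F (Ks s)) {v w : V}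
    (hv : v ∈ F) (hw : w ∈ F) : v + w ∈ F := by
  obtain ⟨y, _, rfl⟩ := hF
  refine ⟨Ks_add hv.1 hw.1, ?_⟩
  have h1 := hv.2; have h2 := hw.2
  simp only [Set.mem_setOf_eq] at h1 h2 ⊢
  rw [inner_add_left, h1, h2]; ring

lemma face_smul {s : Finset V} {F : Set V} (hF : IsFaceOf F (Ks s)) {v : V} {a : ℝ}
    (ha : 0 ≤ a) (hv : v ∈ F) : a • v ∈ F := by
  obtain ⟨y, _, rfl⟩ := hF
  refine ⟨Ks_smul ha hv.1, ?_⟩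
  have h1 := hv.2
  simp only [Set.mem_setOf_eq] at h1 ⊢
  rw [real_inner_smul_left, h1]; ring

/-- A "relative interior point" of any additively closed subset of the cone:
a point of `S` where exactly the constraints in `TsF s S` vanish. -/
lemma exists_int_pt {s : Finset V} {S : Set V} (hS : S ⊆ Ks s) (h0 : (0:V) ∈ S)
    (hadd : ∀ v ∈ S, ∀ w ∈ S, v + w ∈ S) :
    ∃ z ∈ S, (∀ t ∈ TsF s S, ⟪z, t⟫ = 0) ∧ (∀ t ∈ s, t ∉ TsF s S → 0 < ⟪z, t⟫) := by
  classical
  have hwit : ∀ t ∈ s \ TsF s S, ∃ w ∈ S, 0 < ⟪w, t⟫ := by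
    intro t ht
    rcases Finset.mem_sdiff.1 ht with ⟨hts, htn⟩
    rw [mem_TsF] at htn
    push_neg at htn
    obtain ⟨w, hw, hwne⟩ := htn hts
    exact ⟨w, hw, lt_of_le_of_ne (hS hw t hts) (Ne.symm hwne)⟩
  choose w hwS hwpos using hwit
  set z : V := ∑ t ∈ (s \ TsF s S).attach, w t.1 t.2 with hz
  have hzS : z ∈ S := by
    rw [hz]
    refine Finset.sum_induction _ (· ∈ S) (fun a b ha hb => hadd a ha b hb) h0 ?_
    intro i _
    exact hwS i.1 i.2
  refine ⟨z, hzS, ?_, ?_⟩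
  · intro t ht
    exact (mem_TsF.1 ht).2 z hzS
  · intro t hts htn
    have htmem : t ∈ s \ TsF s S := Finset.mem_sdiff.2 ⟨hts, htn⟩
    rw [hz, sum_inner]
    refine Finset.sum_pos' ?_ ⟨⟨t, htmem⟩, Finset.mem_attach _ _, hwpos t htmem⟩
    intro i _
    exact hS (hwS i.1 i.2) t hts

/-- ENUM : every face of `Ks s` equals `faceT s (TsF s F)`. -/
lemma face_eq_faceT {s : Finset V} {F : Set V} (hF : IsFaceOf F (Ks s)) :
    F = faceT s (TsF s F) := by
  obtain ⟨y, hy, hFy⟩ := hF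
  apply Set.Subset.antisymm
  · intro v hv
    refine ⟨(hFy ▸ hv).1, subset_perpS_TsF hv⟩
  · intro v hv
    obtain ⟨hvK, hvp⟩ := hv
    -- get interior point of F
    have hF' : IsFaceOf F (Ks s) := ⟨y, hy, hFy⟩
    obtain ⟨z, hzF, hz0, hzpos⟩ := exists_int_pt (face_subset hF') (face_zero hF')
      (fun a ha b hb => face_add hF' ha hb)
    -- choose ε with z - ε v ∈ Ks s
    have key : ∀ t ∈ (s \ TsF s F).filter (fun t => 0 < ⟪v, t⟫),
        0 < ⟪z, t⟫ / ⟪v, t⟫ := by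
      intro t ht
      rcases Finset.mem_filter.1 ht with ⟨hts, hpos⟩
      rcases Finset.mem_sdiff.1 hts with ⟨h1, h2⟩
      exact div_pos (hzpos t h1 h2) hpos
    obtain ⟨ε, hε, hεle⟩ := exists_pos_forall _ _ key
    have hzv : z - ε • v ∈ Ks s := by
      intro t ht
      rw [inner_sub_left, real_inner_smul_left]
      by_cases htF : t ∈ TsF s F
      · rw [hz0 t htF, hvp t htF]
        simp
      · by_cases hvt : 0 < ⟪v, t⟫
        · have hle : ε ≤ ⟪z, t⟫ / ⟪v, t⟫ := hεle t (Finset.mem_filter.2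
            ⟨Finset.mem_sdiff.2 ⟨ht, htF⟩, hvt⟩)
          have h3 : ε * ⟪v, t⟫ ≤ ⟪z, t⟫ := (le_div_iff₀ hvt).1 hle
          linarith
        · push_neg at hvt
          have h1 : 0 < ⟪z, t⟫ := hzpos t ht htF
          nlinarith
    have h2 : 0 ≤ ⟪z, y⟫ - ε * ⟪v, y⟫ := by
      have := hy hzv
      simpa [inner_sub_left, real_inner_smul_left] using this
    have hzy : ⟪z, y⟫ = 0 := (hFy ▸ hzF).2
    have hvy1 : ⟪v, y⟫ ≤ 0 := by
      rw [hzy] at h2; nlinarith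
    have hvy2 : 0 ≤ ⟪v, y⟫ := hy hvK
    rw [hFy]
    exact ⟨hvK, le_antisymm hvy1 hvy2⟩

lemma isFace_iff_mem_Fas {s : Finset V} {F : Set V} :
    IsFaceOf F (Ks s) ↔ F ∈ Fas s := by
  constructor
  · intro hF
    exact Finset.mem_image.2 ⟨TsF s F, Finset.mem_powerset.2 (TsF_subset s F),
      (face_eq_faceT hF).symm⟩
  · intro hF
    obtain ⟨T, hT, rfl⟩ := Finset.mem_image.1 hF
    exact faceT_isFace (Finset.mem_powerset.1 hT)

lemma Ks_isFace_self (s : Finset V) : IsFaceOf (Ks s) (Ks s) := by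
  refine ⟨0, by simp, ?_⟩
  ext v; simp

/-- master pushing lemma: from an interior point `z` of `S` one can move in any direction
of the localized cone `Ks (TsF s S)` and stay in `Ks s`. -/
lemma loc_push {s : Finset V} {S : Set V} {z v : V}
    (hz0 : ∀ t ∈ TsF s S, ⟪z, t⟫ = 0) (hzpos : ∀ t ∈ s, t ∉ TsF s S → 0 < ⟪z, t⟫)
    (hv : v ∈ Ks (TsF s S)) :
    ∃ ε : ℝ, 0 < ε ∧ z + ε • v ∈ Ks s := by
  classical
  have key : ∀ t ∈ (s \ TsF s S).filter (fun t => ⟪v, t⟫ < 0),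
      0 < ⟪z, t⟫ / (-⟪v, t⟫) := by
    intro t ht
    rcases Finset.mem_filter.1 ht with ⟨hts, hneg⟩
    rcases Finset.mem_sdiff.1 hts with ⟨h1, h2⟩
    exact div_pos (hzpos t h1 h2) (by linarith)
  obtain ⟨ε, hε, hεle⟩ := exists_pos_forall _ _ key
  refine ⟨ε, hε, ?_⟩
  intro t ht
  rw [inner_add_left, real_inner_smul_left]
  by_cases htF : t ∈ TsF s S
  · rw [hz0 t htF]
    have := hv t htF
    nlinarith
  · by_cases hvt : ⟪v, t⟫ < 0
    · have hle : ε ≤ ⟪z, t⟫ / (-⟪v, t⟫) := hεle t (Finset.mem_filter.2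
        ⟨Finset.mem_sdiff.2 ⟨ht, htF⟩, hvt⟩)
      have h3 : ε * (-⟪v, t⟫) ≤ ⟪z, t⟫ := (le_div_iff₀ (by linarith)).1 hle
      linarith
    · push_neg at hvt
      have h1 : 0 < ⟪z, t⟫ := hzpos t ht htF
      nlinarith

lemma perpS_mem_KsT {s : Finset V} {S : Set V} {v : V} (hv : v ∈ perpS (TsF s S)) :
    v ∈ Ks (TsF s S) := perpS_subset_Ks hv

/-- ENUM for faces of faces -/
lemma faceface_eq_faceT {s : Finset V} {F F' : Set V} (hF : IsFaceOf F (Ks s))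
    (hF' : IsFaceOf F' F) : F' = faceT s (TsF s F') := by
  obtain ⟨y, hy, hF'y⟩ := hF'
  have hsubF : F' ⊆ F := by rw [hF'y]; exact Set.inter_subset_left
  have hsubK : F' ⊆ Ks s := hsubF.trans (face_subset hF)
  apply Set.Subset.antisymm
  · intro v hv
    exact ⟨hsubK hv, subset_perpS_TsF hv⟩
  · intro v hv
    obtain ⟨hvK, hvp⟩ := hv
    have h0' : (0:V) ∈ F' := by
      rw [hF'y]; exact ⟨face_zero hF, by simp⟩
    have hadd' : ∀ a ∈ F', ∀ b ∈ F', a + b ∈ F' := by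
      intro a ha b hb
      rw [hF'y] at ha hb ⊢
      refine ⟨face_add hF ha.1 hb.1, ?_⟩
      have h1 := ha.2; have h2 := hb.2
      simp only [Set.mem_setOf_eq] at h1 h2 ⊢
      rw [inner_add_left, h1, h2]; ring
    obtain ⟨z, hzF, hz0, hzpos⟩ := exists_int_pt hsubK h0' hadd'
    have hTsub : TsF s F ⊆ TsF s F' := TsF_anti hsubF
    have hvK' : -v ∈ Ks (TsF s F') := perpS_mem_KsT (perpS_neg hvp)
    obtain ⟨ε, hε, hzv⟩ := loc_push hz0 hzpos hvK'
    have hzv' : z + ε • (-v) ∈ F := by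
      rw [face_eq_faceT hF]
      refine ⟨hzv, ?_⟩
      intro t ht
      rw [inner_add_left, real_inner_smul_left, hz0 t (hTsub ht), inner_neg_left,
        hvp t (hTsub ht)]
      ring
    have h2 : 0 ≤ ⟪z + ε • (-v), y⟫ := hy hzv'
    rw [inner_add_left, real_inner_smul_left, inner_neg_left] at h2
    have hzy : ⟪z, y⟫ = 0 := by
      have := hF'y ▸ hzF; exact this.2
    have hvF : v ∈ F := by
      rw [face_eq_faceT hF]
      exact ⟨hvK, perpS_anti hTsub hvp⟩
    have hvy2 : 0 ≤ ⟪v, y⟫ := hy hvF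
    have hvy1 : ⟪v, y⟫ ≤ 0 := by rw [hzy] at h2; nlinarith
    rw [hF'y]
    exact ⟨hvF, le_antisymm hvy1 hvy2⟩

lemma face_trans {s : Finset V} {F F' : Set V} (hF : IsFaceOf F (Ks s))
    (hF' : IsFaceOf F' F) : IsFaceOf F' (Ks s) := by
  rw [faceface_eq_faceT hF hF']
  exact faceT_isFace (TsF_subset s F')

lemma face_cut {s : Finset V} {F : Set V} {g : V} (hF : IsFaceOf F (Ks s))
    (hFg : F ⊆ {v : V | 0 ≤ ⟪v, g⟫}) : IsFaceOf (F ∩ {v : V | ⟪v, g⟫ = 0}) (Ks s) :=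
  face_trans hF ⟨g, hFg, rfl⟩

lemma span_face {s : Finset V} {F : Set V} (hF : IsFaceOf F (Ks s)) :
    Submodule.span ℝ F = pSub (TsF s F) := by
  apply le_antisymm
  · rw [Submodule.span_le, pSub_coe]
    exact subset_perpS_TsF
  · intro v hv
    obtain ⟨z, hzF, hz0, hzpos⟩ := exists_int_pt (face_subset hF) (face_zero hF)
      (fun a ha b hb => face_add hF ha hb)
    have hv' : (v : V) ∈ perpS (TsF s F) := hv
    obtain ⟨ε₁, hε₁, h1⟩ := loc_push hz0 hzpos (perpS_mem_KsT hv')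
    obtain ⟨ε₂, hε₂, h2⟩ := loc_push hz0 hzpos (perpS_mem_KsT (perpS_neg hv'))
    have hm1 : z + ε₁ • v ∈ F := by
      rw [face_eq_faceT hF]
      refine ⟨h1, ?_⟩
      intro t ht
      rw [inner_add_left, real_inner_smul_left, hz0 t ht, hv' t ht]; ring
    have hm2 : z + ε₂ • (-v) ∈ F := by
      rw [face_eq_faceT hF]
      refine ⟨h2, ?_⟩
      intro t ht
      rw [inner_add_left, real_inner_smul_left, hz0 t ht, inner_neg_left, hv' t ht]; ring
    have : v = (ε₁ + ε₂)⁻¹ • ((z + ε₁ • v) - (z + ε₂ • (-v))) := by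
      have hne : ε₁ + ε₂ ≠ 0 := by positivity
      rw [smul_neg]
      match_scalars <;> field_simp <;> ring
    rw [this]
    exact Submodule.smul_mem _ _ (Submodule.sub_mem _
      (Submodule.subset_span hm1) (Submodule.subset_span hm2))

lemma sdim_face {s : Finset V} {F : Set V} (hF : IsFaceOf F (Ks s)) :
    sdim F = Module.finrank ℝ (pSub (TsF s F)) := by
  rw [sdim, span_face hF]

lemma Mf_isFace (s : Finset V) : IsFaceOf (perpS s) (Ks s) := by
  have : perpS s = faceT s s := by
    ext v; exact ⟨fun h => ⟨perpS_subset_Ks h, h⟩, fun h => h.2⟩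
  rw [this]
  exact faceT_isFace (le_refl s)

lemma Mf_subset_face {s : Finset V} {F : Set V} (hF : IsFaceOf F (Ks s)) :
    perpS s ⊆ F := by
  obtain ⟨y, hy, rfl⟩ := hF
  intro v hv
  have h1 : 0 ≤ ⟪v, y⟫ := hy (perpS_subset_Ks hv)
  have h2 : 0 ≤ ⟪-v, y⟫ := hy (perpS_subset_Ks (perpS_neg hv))
  rw [inner_neg_left] at h2
  exact ⟨perpS_subset_Ks hv, le_antisymm (by linarith) h1⟩

lemma mem_Mf_of_pm {s : Finset V} {v : V} (h1 : v ∈ Ks s) (h2 : -v ∈ Ks s) :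
    v ∈ perpS s := by
  intro t ht
  have := h2 t ht
  rw [inner_neg_left] at this
  exact le_antisymm (by linarith) (h1 t ht)

lemma TsF_Mf (s : Finset V) : TsF s (perpS s) = s := by
  apply Finset.filter_true_of_mem
  intro t ht v hv
  exact hv t ht

lemma sdim_lt_of_face_ssub {s : Finset V} {F F' : Set V} (hF : IsFaceOf F (Ks s))
    (hF' : IsFaceOf F' (Ks s)) (h : F' ⊂ F) : sdim F' < sdim F := by
  have hle : Submodule.span ℝ F' ≤ Submodule.span ℝ F := Submodule.span_mono h.1
  have hne : Submodule.span ℝ F' ≠ Submodule.span ℝ F := by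
    intro heq
    apply h.2
    intro f hf
    have hf1 : f ∈ (Submodule.span ℝ F : Set V) := Submodule.subset_span hf
    have hf2 : f ∈ (Submodule.span ℝ F' : Set V) := by rw [heq]; exact hf1
    rw [span_face hF', pSub_coe] at hf2
    rw [face_eq_faceT hF']
    exact ⟨face_subset hF hf, hf2⟩
  exact Submodule.finrank_lt_finrank_of_lt (lt_of_le_of_ne hle hne)

lemma perpS_union {T₁ T₂ : Finset V} : perpS (T₁ ∪ T₂) = perpS T₁ ∩ perpS T₂ := by
  ext v
  simp only [perpS, Set.mem_setOf_eq, Set.mem_inter_iff, Finset.mem_union]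
  constructor
  · intro h; exact ⟨fun t ht => h t (Or.inl ht), fun t ht => h t (Or.inr ht)⟩
  · rintro ⟨h1, h2⟩ t (ht | ht); exacts [h1 t ht, h2 t ht]

lemma face_inter {s : Finset V} {F F' : Set V} (hF : IsFaceOf F (Ks s))
    (hF' : IsFaceOf F' (Ks s)) : IsFaceOf (F ∩ F') (Ks s) := by
  have : F ∩ F' = faceT s (TsF s F ∪ TsF s F') := by
    ext v
    constructor
    · rintro ⟨h1, h2⟩
      refine ⟨face_subset hF h1, ?_⟩
      intro t ht
      rcases Finset.mem_union.1 ht with ht' | ht'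
      · exact (mem_TsF.1 ht').2 v h1
      · exact (mem_TsF.1 ht').2 v h2
    · rintro ⟨h1, h2⟩
      rw [perpS_union] at h2
      constructor
      · rw [face_eq_faceT hF]; exact ⟨h1, h2.1⟩
      · rw [face_eq_faceT hF']; exact ⟨h1, h2.2⟩
  rw [this]
  exact faceT_isFace (Finset.union_subset (TsF_subset s F) (TsF_subset s F'))

/- ## Halfspaces, localization -/

def Hp (g : V) : Set V := {v : V | 0 ≤ ⟪v, g⟫}

def Hz (g : V) : Set V := {v : V | ⟪v, g⟫ = 0}

def zSub (g : V) : Submodule ℝ V where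
  carrier := Hz g
  add_mem' := by intro a b ha hb; simp only [Hz, Set.mem_setOf_eq, inner_add_left] at *; rw [ha, hb]; ring
  zero_mem' := by simp [Hz]
  smul_mem' := by intro c a ha; simp only [Hz, Set.mem_setOf_eq, real_inner_smul_left] at *; rw [ha]; ring

lemma span_subset_Hz {s : Finset V} {H : Set V} {g : V} (hH : IsFaceOf H (Ks s))
    (hHg : H ⊆ Hz g) : perpS (TsF s H) ⊆ Hz g := by
  have h1 : Submodule.span ℝ H ≤ zSub g := Submodule.span_le.2 hHg
  intro v hv
  have : v ∈ (pSub (TsF s H) : Set V) := hv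
  rw [← span_face hH] at this
  exact h1 this

/-- `F ⊆ down F` -/
lemma subset_down {s : Finset V} {F : Set V} (hF : IsFaceOf F (Ks s)) :
    F ⊆ faceT (TsF s H') (TsF s F) := by
  intro v hv
  exact ⟨Ks_anti (TsF_subset s H') (face_subset hF hv), subset_perpS_TsF hv⟩

/-- push from an interior point of `H` into a face `F ⊇ H`. -/
lemma push_mem {s : Finset V} {H F : Set V} {z v : V}
    (hF : IsFaceOf F (Ks s)) (hHF : H ⊆ F)
    (hz0 : ∀ t ∈ TsF s H, ⟪z, t⟫ = 0) (hzpos : ∀ t ∈ s, t ∉ TsF s H → 0 < ⟪z, t⟫)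
    (hvK : v ∈ Ks (TsF s H)) (hvp : v ∈ perpS (TsF s F)) :
    ∃ ε : ℝ, 0 < ε ∧ z + ε • v ∈ F := by
  obtain ⟨ε, hε, hK⟩ := loc_push hz0 hzpos hvK
  refine ⟨ε, hε, ?_⟩
  rw [face_eq_faceT hF]
  refine ⟨hK, ?_⟩
  intro t ht
  have hz0' : ⟪z, t⟫ = 0 := hz0 t (TsF_anti hHF ht)
  rw [inner_add_left, real_inner_smul_left, hz0', hvp t ht]
  ring

section Loc

variable {s : Finset V} {H : Set V} (hH : IsFaceOf H (Ks s))

/-- the two transfer maps -/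
def dn (s : Finset V) (H F : Set V) : Set V := faceT (TsF s H) (TsF s F)

def up (s : Finset V) (H F' : Set V) : Set V := faceT s (TsF (TsF s H) F')

lemma TsF_dn {s : Finset V} {H F : Set V} (hH : IsFaceOf H (Ks s)) (hF : IsFaceOf F (Ks s))
    (hHF : H ⊆ F) : TsF (TsF s H) (dn s H F) = TsF s F := by
  apply Finset.Subset.antisymm
  · intro u hu
    rw [mem_TsF] at hu ⊢
    refine ⟨TsF_subset s H hu.1, ?_⟩
    intro v hv
    exact hu.2 v (subset_down hF hv)
  · intro u hu
    rw [mem_TsF] at hu ⊢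
    refine ⟨?_, ?_⟩
    · exact TsF_anti hHF (mem_TsF.2 hu)
    · intro v hv
      exact hv.2 u (mem_TsF.2 hu)

lemma dn_mem_Fas {s : Finset V} {H F : Set V} (hH : IsFaceOf H (Ks s)) (hF : IsFaceOf F (Ks s))
    (hHF : H ⊆ F) : dn s H F ∈ Fas (TsF s H) := by
  rw [← isFace_iff_mem_Fas]
  exact faceT_isFace (TsF_anti hHF)

lemma up_dn {s : Finset V} {H F : Set V} (hH : IsFaceOf H (Ks s)) (hF : IsFaceOf F (Ks s))
    (hHF : H ⊆ F) : up s H (dn s H F) = F := by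
  rw [up, TsF_dn hH hF hHF, ← face_eq_faceT hF]

lemma up_isFace {s : Finset V} {H F' : Set V} (hH : IsFaceOf H (Ks s)) :
    IsFaceOf (up s H F') (Ks s) :=
  faceT_isFace ((TsF_subset _ _).trans (TsF_subset s H))

lemma subset_up {s : Finset V} {H F' : Set V} (hH : IsFaceOf H (Ks s))
    (hF' : IsFaceOf F' (Ks (TsF s H))) : H ⊆ up s H F' := by
  have h1 : H = faceT s (TsF s H) := face_eq_faceT hH
  rw [up]
  intro v hv
  refine ⟨(h1 ▸ hv).1, ?_⟩
  exact perpS_anti (TsF_subset _ _) (h1 ▸ hv).2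

lemma dn_up {s : Finset V} {H F' : Set V} (hH : IsFaceOf H (Ks s))
    (hF' : IsFaceOf F' (Ks (TsF s H))) : dn s H (up s H F') = F' := by
  obtain ⟨z, hzH, hz0, hzpos⟩ := exists_int_pt (face_subset hH) (face_zero hH)
    (fun a ha b hb => face_add hH ha hb)
  set Tb : Finset V := TsF (TsF s H) F' with hTb
  have hupT : up s H F' = faceT s Tb := rfl
  have hTbsub : Tb ⊆ TsF s H := TsF_subset _ _
  have hsub1 : Tb ⊆ TsF s (up s H F') := by
    intro u hu
    rw [mem_TsF]
    refine ⟨TsF_subset s H (hTbsub hu), ?_⟩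
    intro v hv
    exact hv.2 u hu
  apply Set.Subset.antisymm
  · -- dn (up F') ⊆ F'
    intro v hv
    rw [face_eq_faceT hF']
    exact ⟨hv.1, perpS_anti hsub1 hv.2⟩
  · -- F' ⊆ dn (up F')
    intro v hv
    have hvK : v ∈ Ks (TsF s H) := face_subset hF' hv
    refine ⟨hvK, ?_⟩
    intro u hu
    -- u ∈ TsF s (up s H F'); push z in direction v to land in up s H F'
    have hvpTb : v ∈ perpS Tb := subset_perpS_TsF hv
    obtain ⟨ε, hε, hKs⟩ := loc_push hz0 hzpos hvK
    have hmem : z + ε • v ∈ up s H F' := by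
      rw [hupT]
      refine ⟨hKs, ?_⟩
      intro t ht
      have hz0' : ⟪z, t⟫ = 0 := hz0 t (hTbsub ht)
      rw [inner_add_left, real_inner_smul_left, hz0', hvpTb t ht]; ring
    have hukill : ⟪z + ε • v, u⟫ = 0 := (mem_TsF.1 hu).2 _ hmem
    have hzu : ⟪z, u⟫ = 0 := by
      have huH : up s H F' ⊆ {w : V | ⟪w, u⟫ = 0} := fun w hw => (mem_TsF.1 hu).2 w hw
      -- z ∈ H ⊆ up s H F'
      exact huH (subset_up hH hF' hzH)
    rw [inner_add_left, real_inner_smul_left, hzu] at hukill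
    have : ⟪v, u⟫ = 0 := by
      have := hukill
      nlinarith
    exact this

lemma sdim_dn {s : Finset V} {H F : Set V} (hH : IsFaceOf H (Ks s)) (hF : IsFaceOf F (Ks s))
    (hHF : H ⊆ F) : sdim (dn s H F) = sdim F := by
  have h1 : IsFaceOf (dn s H F) (Ks (TsF s H)) := isFace_iff_mem_Fas.2 (dn_mem_Fas hH hF hHF)
  rw [sdim_face h1, sdim_face hF, TsF_dn hH hF hHF]

lemma dn_Hp {s : Finset V} {H F : Set V} {g : V} (hH : IsFaceOf H (Ks s)) (hF : IsFaceOf F (Ks s))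
    (hHF : H ⊆ F) (hHg : H ⊆ Hz g) : F ⊆ Hp g ↔ dn s H F ⊆ Hp g := by
  constructor
  · intro h v hv
    obtain ⟨z, hzH, hz0, hzpos⟩ := exists_int_pt (face_subset hH) (face_zero hH)
      (fun a ha b hb => face_add hH ha hb)
    obtain ⟨ε, hε, hmem⟩ := push_mem hF hHF hz0 hzpos hv.1 hv.2
    have := h hmem
    have hzg : ⟪z, g⟫ = 0 := hHg hzH
    simp only [Hp, Set.mem_setOf_eq, inner_add_left, real_inner_smul_left, hzg] at this ⊢
    nlinarith
  · intro h v hv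
    exact h (subset_down hF hv)

lemma dn_cut {s : Finset V} {H F : Set V} {g : V} (hH : IsFaceOf H (Ks s)) (hF : IsFaceOf F (Ks s))
    (hHF : H ⊆ F) (hHg : H ⊆ Hz g) :
    F ∩ Hz g = H ↔ dn s H F ∩ Hz g = perpS (TsF s H) := by
  obtain ⟨z, hzH, hz0, hzpos⟩ := exists_int_pt (face_subset hH) (face_zero hH)
    (fun a ha b hb => face_add hH ha hb)
  constructor
  · intro h
    apply Set.Subset.antisymm
    · rintro v ⟨hvd, hvz⟩
      obtain ⟨ε, hε, hmem⟩ := push_mem hF hHF hz0 hzpos hvd.1 hvd.2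
      have hin : z + ε • v ∈ H := by
        rw [← h]
        refine ⟨hmem, ?_⟩
        have hzg : ⟪z, g⟫ = 0 := hHg hzH
        simp only [Hz, Set.mem_setOf_eq, inner_add_left, real_inner_smul_left, hzg] at hvz ⊢
        rw [hvz]; ring
      have hzp : z ∈ perpS (TsF s H) := subset_perpS_TsF hzH
      have hip : z + ε • v ∈ perpS (TsF s H) := subset_perpS_TsF hin
      have : v = ε⁻¹ • ((z + ε • v) - z) := by
        match_scalars <;> field_simp <;> ring
      rw [this]
      exact perpS_smul _ (perpS_sub hip hzp)
    · intro v hv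
      refine ⟨⟨perpS_subset_Ks hv, perpS_anti (TsF_anti hHF) hv⟩, span_subset_Hz hH hHg hv⟩
  · intro h
    apply Set.Subset.antisymm
    · rintro v ⟨hvF, hvz⟩
      have : v ∈ perpS (TsF s H) := by
        rw [← h]
        exact ⟨subset_down hF hvF, hvz⟩
      rw [face_eq_faceT hH]
      exact ⟨face_subset hF hvF, this⟩
    · intro v hv
      exact ⟨hHF hv, hHg hv⟩

end Loc

/- ## Sums -/

def chi (s : Finset V) : ℝ := ∑ F ∈ Fas s, (-1:ℝ)^(sdim F)

def sig (s : Finset V) (g : V) : ℝ :=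
  ∑ F ∈ (Fas s).filter (fun F => F ⊆ Hp g ∧ F ∩ Hz g = perpS s), (-1:ℝ)^(sdim F)

lemma loc_sum {s : Finset V} {H : Set V} {g : V} (hH : IsFaceOf H (Ks s)) (hHg : H ⊆ Hz g) :
    ∑ F ∈ (Fas s).filter (fun F => F ⊆ Hp g ∧ F ∩ Hz g = H), (-1:ℝ)^(sdim F)
      = sig (TsF s H) g := by
  rw [sig]
  refine Finset.sum_nbij' (dn s H) (up s H) ?_ ?_ ?_ ?_ ?_
  · intro F hF
    rcases Finset.mem_filter.1 hF with ⟨hFm, h1, h2⟩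
    have hFf : IsFaceOf F (Ks s) := isFace_iff_mem_Fas.2 hFm
    have hHF : H ⊆ F := by rw [← h2]; exact Set.inter_subset_left
    refine Finset.mem_filter.2 ⟨dn_mem_Fas hH hFf hHF, ?_, ?_⟩
    · exact (dn_Hp hH hFf hHF hHg).1 h1
    · exact (dn_cut hH hFf hHF hHg).1 h2
  · intro F' hF'
    rcases Finset.mem_filter.1 hF' with ⟨hFm', h1, h2⟩
    have hFf' : IsFaceOf F' (Ks (TsF s H)) := isFace_iff_mem_Fas.2 hFm'
    have hface : IsFaceOf (up s H F') (Ks s) := up_isFace hH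
    have hHF : H ⊆ up s H F' := subset_up hH hFf'
    have hd : dn s H (up s H F') = F' := dn_up hH hFf'
    refine Finset.mem_filter.2 ⟨isFace_iff_mem_Fas.1 hface, ?_, ?_⟩
    · rw [dn_Hp hH hface hHF hHg, hd]; exact h1
    · rw [dn_cut hH hface hHF hHg, hd]; exact h2
  · intro F hF
    rcases Finset.mem_filter.1 hF with ⟨hFm, h1, h2⟩
    have hFf : IsFaceOf F (Ks s) := isFace_iff_mem_Fas.2 hFm
    have hHF : H ⊆ F := by rw [← h2]; exact Set.inter_subset_left
    exact up_dn hH hFf hHF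
  · intro F' hF'
    rcases Finset.mem_filter.1 hF' with ⟨hFm', h1, h2⟩
    exact dn_up hH (isFace_iff_mem_Fas.2 hFm')
  · intro F hF
    rcases Finset.mem_filter.1 hF with ⟨hFm, h1, h2⟩
    have hFf : IsFaceOf F (Ks s) := isFace_iff_mem_Fas.2 hFm
    have hHF : H ⊆ F := by rw [← h2]; exact Set.inter_subset_left
    rw [sdim_dn hH hFf hHF]

lemma partition_sum {s : Finset V} {g : V} :
    ∑ F ∈ (Fas s).filter (fun F => F ⊆ Hp g), (-1:ℝ)^(sdim F)
      = ∑ H ∈ (Fas s).filter (fun H => H ⊆ Hz g),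
          ∑ F ∈ (Fas s).filter (fun F => F ⊆ Hp g ∧ F ∩ Hz g = H), (-1:ℝ)^(sdim F) := by
  classical
  have hmap : ∀ F ∈ (Fas s).filter (fun F => F ⊆ Hp g),
      F ∩ Hz g ∈ (Fas s).filter (fun H => H ⊆ Hz g) := by
    intro F hF
    rcases Finset.mem_filter.1 hF with ⟨hFm, h1⟩
    have hFf : IsFaceOf F (Ks s) := isFace_iff_mem_Fas.2 hFm
    refine Finset.mem_filter.2 ⟨isFace_iff_mem_Fas.1 (face_cut hFf h1), Set.inter_subset_right⟩
  have := Finset.sum_fiberwise_of_maps_to hmap (fun F => (-1:ℝ)^(sdim F))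
  rw [← this]
  apply Finset.sum_congr rfl
  intro H hH
  rw [Finset.filter_filter]

lemma sig_empty_of_not_sub {s : Finset V} {g : V} (h : ¬ perpS s ⊆ Hz g) : sig s g = 0 := by
  rw [sig]
  rw [Finset.filter_false_of_mem, Finset.sum_empty]
  rintro F hF ⟨h1, h2⟩
  exact h (by rw [← h2]; exact Set.inter_subset_right)

lemma faces_subset_Hp_of_Ks {s : Finset V} {g : V} (h : Ks s ⊆ Hp g) :
    (Fas s).filter (fun F => F ⊆ Hp g) = Fas s := by
  apply Finset.filter_true_of_mem
  intro F hF
  exact (face_subset (isFace_iff_mem_Fas.2 hF)).trans h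

/- ## Analytic prerequisites for the Morse argument -/

def t0 (s : Finset V) : V := ∑ t ∈ s, t

lemma inner_t0 {s : Finset V} (v : V) : ⟪v, t0 s⟫ = ∑ t ∈ s, ⟪v, t⟫ := by
  rw [t0, inner_sum]

lemma t0_nonneg {s : Finset V} {v : V} (hv : v ∈ Ks s) : 0 ≤ ⟪v, t0 s⟫ := by
  rw [inner_t0]; exact Finset.sum_nonneg (fun t ht => hv t ht)

lemma t0_zero_iff {s : Finset V} {v : V} (hv : v ∈ Ks s) :
    ⟪v, t0 s⟫ = 0 ↔ v ∈ perpS s := by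
  rw [inner_t0]
  constructor
  · intro h
    exact fun t ht => (Finset.sum_eq_zero_iff_of_nonneg (fun t ht => hv t ht)).1 h t ht
  · intro h
    exact Finset.sum_eq_zero (fun t ht => h t ht)

lemma t0_perp {s : Finset V} {m : V} (hm : m ∈ perpS s) : ⟪m, t0 s⟫ = 0 := by
  rw [inner_t0]; exact Finset.sum_eq_zero (fun t ht => hm t ht)

lemma isClosed_Ks (s : Finset V) : IsClosed (Ks s) := by
  have : Ks s = ⋂ t ∈ s, {v : V | 0 ≤ ⟪v, t⟫} := by
    ext v; simp [Ks, Set.mem_iInter]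
  rw [this]
  exact isClosed_biInter (fun t _ => isClosed_le continuous_const
    (Continuous.inner continuous_id continuous_const))

lemma isClosed_face {s : Finset V} {F : Set V} (hF : IsFaceOf F (Ks s)) : IsClosed F := by
  obtain ⟨y, _, rfl⟩ := hF
  exact (isClosed_Ks s).inter (isClosed_eq (Continuous.inner continuous_id continuous_const)
    continuous_const)

/-- the compact "base" of a set, relative to the minimal face -/
def Bset (s : Finset V) (X : Set V) : Set V :=
  X ∩ ((pSub s)ᗮ : Set V) ∩ {v : V | ⟪v, t0 s⟫ = 1}

lemma Bset_mono {s : Finset V} {X Y : Set V} (h : X ⊆ Y) : Bset s X ⊆ Bset s Y := by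
  intro v hv; exact ⟨⟨h hv.1.1, hv.1.2⟩, hv.2⟩

lemma Bset_t0 {s : Finset V} {X : Set V} {v : V} (hv : v ∈ Bset s X) : ⟪v, t0 s⟫ = 1 := hv.2

lemma Bset_not_mem_Mf {s : Finset V} {X : Set V} {v : V} (hv : v ∈ Bset s X) :
    v ∉ perpS s := by
  intro hm
  have := t0_perp hm
  rw [Bset_t0 hv] at this
  norm_num at this

lemma norm_bound (s : Finset V) : ∃ c : ℝ, 0 < c ∧
    ∀ v ∈ Ks s, v ∈ ((pSub s)ᗮ : Set V) → ‖v‖ ≤ c * ⟪v, t0 s⟫ := by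
  classical
  set K0 : Set V := Ks s ∩ ((pSub s)ᗮ : Set V) ∩ Metric.sphere (0:V) 1 with hK0
  have hK0closed : IsClosed K0 := (((isClosed_Ks s).inter
    (Submodule.closed_of_finiteDimensional _)).inter Metric.isClosed_sphere)
  have hK0cpt : IsCompact K0 := Metric.isCompact_of_isClosed_isBounded hK0closed
    (Bornology.IsBounded.subset Metric.isBounded_sphere Set.inter_subset_right)
  by_cases hne : K0.Nonempty
  · obtain ⟨x0, hx0, hmin⟩ := hK0cpt.exists_isMinOn hne
      ((Continuous.inner continuous_id continuous_const).continuousOn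
        (f := fun v : V => ⟪v, t0 s⟫))
    set m : ℝ := ⟪x0, t0 s⟫ with hm
    have hmpos : 0 < m := by
      rcases lt_or_eq_of_le (t0_nonneg hx0.1.1) with h | h
      · exact h
      · exfalso
        have hx0M : x0 ∈ perpS s := (t0_zero_iff hx0.1.1).1 h.symm
        have hx0p : x0 ∈ (pSub s)ᗮ := hx0.1.2
        have hx00 : x0 = 0 := by
          have h2 : ⟪x0, x0⟫ = 0 := (Submodule.mem_orthogonal _ _).1 hx0p x0 hx0M
          exact inner_self_eq_zero.1 h2
        have hs := hx0.2
        rw [hx00] at hs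
        simp at hs
    refine ⟨m⁻¹, by positivity, ?_⟩
    intro v hv hvp
    by_cases hv0 : v = 0
    · simp [hv0]
    · have hvs : ‖v‖⁻¹ • v ∈ K0 := by
        refine ⟨⟨Ks_smul (by positivity) hv, Submodule.smul_mem _ _ hvp⟩, ?_⟩
        simp [norm_smul, abs_inv, abs_norm, inv_mul_cancel₀ (norm_ne_zero_iff.2 hv0)]
      have := hmin hvs
      simp only [Set.mem_setOf_eq] at this
      have h3 : m ≤ ⟪‖v‖⁻¹ • v, t0 s⟫ := this
      rw [real_inner_smul_left] at h3
      have h4 : ‖v‖ * m ≤ ⟪v, t0 s⟫ := by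
        have h5 : 0 < ‖v‖ := norm_pos_iff.2 hv0
        calc ‖v‖ * m ≤ ‖v‖ * (‖v‖⁻¹ * ⟪v, t0 s⟫) := by
              apply mul_le_mul_of_nonneg_left h3 (le_of_lt h5)
          _ = ⟪v, t0 s⟫ := by field_simp
      have h6 := mul_le_mul_of_nonneg_left h4 (le_of_lt (inv_pos.2 hmpos))
      calc ‖v‖ = m⁻¹ * (‖v‖ * m) := by
            rw [mul_comm (‖v‖) m, ← mul_assoc, inv_mul_cancel₀ (ne_of_gt hmpos), one_mul]
        _ ≤ m⁻¹ * ⟪v, t0 s⟫ := h6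
  · refine ⟨1, one_pos, ?_⟩
    intro v hv hvp
    by_cases hv0 : v = 0
    · simp [hv0]
    · exfalso
      exact hne ⟨‖v‖⁻¹ • v, ⟨Ks_smul (by positivity) hv, Submodule.smul_mem _ _ hvp⟩,
        by simp [norm_smul, abs_inv, abs_norm, inv_mul_cancel₀ (norm_ne_zero_iff.2 hv0)]⟩

lemma Bset_compact {s : Finset V} {X : Set V} (hX : IsFaceOf X (Ks s)) :
    IsCompact (Bset s X) := by
  obtain ⟨c, hc, hb⟩ := norm_bound s
  have hclosed : IsClosed (Bset s X) := ((isClosed_face hX).inter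
    (Submodule.closed_of_finiteDimensional _)).inter
    (isClosed_eq (Continuous.inner continuous_id continuous_const) continuous_const)
  apply Metric.isCompact_of_isClosed_isBounded hclosed
  rw [Metric.isBounded_iff_subset_closedBall (0:V)]
  refine ⟨c, ?_⟩
  intro v hv
  simp only [Metric.mem_closedBall, dist_zero_right]
  have := hb v (face_subset hX hv.1.1) hv.1.2
  rw [hv.2, mul_one] at this
  exact this

/- ## Morse combinatorics on minimal faces -/

lemma face_add_perp {s : Finset V} {F : Set V} (hF : IsFaceOf F (Ks s)) {x m : V}
    (hx : x ∈ F) (hm : m ∈ perpS s) : x + m ∈ F := by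
  rw [face_eq_faceT hF] at hx ⊢
  constructor
  · intro t ht
    rw [inner_add_left, hm t ht]
    simpa using hx.1 t ht
  · intro t ht
    rw [inner_add_left, hm t (TsF_subset s F ht), hx.2 t ht]; ring

def pp (s : Finset V) (v : V) : V := v - ↑(Submodule.orthogonalProjectionOnto (pSub s) v)

lemma pp_mem_orth (s : Finset V) (v : V) : pp s v ∈ (pSub s)ᗮ :=
  (pSub s).sub_starProjection_mem_orthogonal v

lemma pp_mem_face {s : Finset V} {F : Set V} (hF : IsFaceOf F (Ks s)) {v : V} (hv : v ∈ F) :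
    pp s v ∈ F := by
  rw [pp, sub_eq_add_neg]
  exact face_add_perp hF hv (perpS_neg (SetLike.coe_mem (Submodule.orthogonalProjectionOnto (pSub s) v)))

lemma pp_inner {s : Finset V} {w : V} (hw : ∀ m ∈ perpS s, ⟪m, w⟫ = 0) (v : V) :
    ⟪pp s v, w⟫ = ⟪v, w⟫ := by
  rw [pp, inner_sub_left, hw _ (SetLike.coe_mem (Submodule.orthogonalProjectionOnto (pSub s) v))]
  ring

lemma t0_pp (s : Finset V) (v : V) : ⟪pp s v, t0 s⟫ = ⟪v, t0 s⟫ :=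
  pp_inner (fun m hm => t0_perp hm) v

lemma mem_pm_zero {s : Finset V} {v : V} (h1 : v ∈ perpS s) (h2 : v ∈ (pSub s)ᗮ) : v = 0 :=
  inner_self_eq_zero.1 ((Submodule.mem_orthogonal _ _).1 h2 v h1)

lemma scale_mem_Bset {s : Finset V} {X : Set V} (hX : IsFaceOf X (Ks s)) {v : V}
    (hv : v ∈ X) (hvM : v ∉ perpS s) :
    ∃ u ∈ Bset s X, 0 < ⟪v, t0 s⟫ ∧ pp s v = ⟪v, t0 s⟫ • u := by
  have hτnn : 0 ≤ ⟪v, t0 s⟫ := t0_nonneg (face_subset hX hv)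
  have hτpos : 0 < ⟪v, t0 s⟫ := by
    rcases lt_or_eq_of_le hτnn with h | h
    · exact h
    · exact absurd ((t0_zero_iff (face_subset hX hv)).1 h.symm) hvM
  set τ := ⟪v, t0 s⟫ with hτ
  refine ⟨τ⁻¹ • pp s v, ⟨⟨face_smul hX (by positivity) (pp_mem_face hX hv),
    Submodule.smul_mem _ _ (pp_mem_orth s v)⟩, ?_⟩, hτpos, ?_⟩
  · simp only [Set.mem_setOf_eq, real_inner_smul_left, t0_pp]
    field_simp
    exact hτ.symm
  · rw [smul_smul, mul_inv_cancel₀ (ne_of_gt hτpos), one_smul]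

lemma B_nonempty {s : Finset V} {X : Set V} (hX : IsFaceOf X (Ks s))
    (hne : ¬ X ⊆ perpS s) : (Bset s X).Nonempty := by
  obtain ⟨x, hx, hxm⟩ := Set.not_subset.1 hne
  obtain ⟨u, hu, _, _⟩ := scale_mem_Bset hX hx hxm
  exact ⟨u, hu⟩

lemma ratio_face {s : Finset V} {X : Set V} {w : V} {lam : ℝ} (hX : IsFaceOf X (Ks s))
    (hwM : ∀ m ∈ perpS s, ⟪m, w⟫ = 0) (hmin : ∀ u ∈ Bset s X, lam ≤ ⟪u, w⟫) :
    X ⊆ Hp (w - lam • t0 s) := by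
  intro v hv
  simp only [Hp, Set.mem_setOf_eq, inner_sub_right, real_inner_smul_right]
  by_cases hvM : v ∈ perpS s
  · rw [hwM v hvM, t0_perp hvM]
    simp
  · obtain ⟨u, hu, hτ, hppv⟩ := scale_mem_Bset hX hv hvM
    have h1 : ⟪v, w⟫ = ⟪v, t0 s⟫ * ⟪u, w⟫ := by
      rw [← pp_inner hwM v, hppv, real_inner_smul_left]
    rw [h1]
    have := hmin u hu
    nlinarith

lemma cut_face_props {s : Finset V} {X : Set V} {g : V} (hX : IsFaceOf X (Ks s))
    (hXg : X ⊆ Hp g) (hgM : ∀ m ∈ perpS s, ⟪m, g⟫ = 0) :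
    IsFaceOf (X ∩ Hz g) (Ks s) ∧ perpS s ⊆ X ∩ Hz g := by
  constructor
  · exact face_cut hX hXg
  · intro m hm
    exact ⟨Mf_subset_face hX hm, hgM m hm⟩

def MinF (s : Finset V) : Finset (Set V) :=
  (Fas s).filter (fun R => perpS s ⊂ R ∧ ∀ F ∈ Fas s, perpS s ⊂ F → F ⊆ R → F = R)

lemma exists_minF_le {s : Finset V} {X : Set V} (hX : X ∈ Fas s) (hMX : perpS s ⊂ X) :
    ∃ R ∈ MinF s, R ⊆ X := by
  classical
  set cand := (Fas s).filter (fun F => perpS s ⊂ F ∧ F ⊆ X) with hcand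
  have hne : cand.Nonempty := ⟨X, Finset.mem_filter.2 ⟨hX, hMX, le_refl X⟩⟩
  obtain ⟨R, hR, hmin'⟩ := Finset.exists_minimal hne
  have hmin : ∀ x ∈ cand, ¬ x < R := fun x hx hlt =>
    lt_irrefl _ (lt_of_lt_of_le hlt (hmin' hx hlt.le))
  rcases Finset.mem_filter.1 hR with ⟨hRm, hMR, hRX⟩
  refine ⟨R, Finset.mem_filter.2 ⟨hRm, hMR, ?_⟩, hRX⟩
  intro F hF hMF hFR
  by_contra hne'
  exact hmin F (Finset.mem_filter.2 ⟨hF, hMF, hFR.trans hRX⟩)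
    (lt_of_le_of_ne hFR hne')

lemma minF_unique_B {s : Finset V} {R : Set V} (hR : R ∈ MinF s) :
    ∀ u₁ ∈ Bset s R, ∀ u₂ ∈ Bset s R, u₁ = u₂ := by
  classical
  rcases Finset.mem_filter.1 hR with ⟨hRm, hMR, hmin⟩
  have hRf : IsFaceOf R (Ks s) := isFace_iff_mem_Fas.2 hRm
  intro u₁ hu₁ u₂ hu₂
  by_contra hne
  set w := u₁ - u₂ with hw
  have hwM : ∀ m ∈ perpS s, ⟪m, w⟫ = 0 := by
    intro m hm
    have h1 : ⟪m, u₁⟫ = 0 := (Submodule.mem_orthogonal _ _).1 hu₁.1.2 m hm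
    have h2 : ⟪m, u₂⟫ = 0 := (Submodule.mem_orthogonal _ _).1 hu₂.1.2 m hm
    rw [hw, inner_sub_right, h1, h2]; ring
  -- minimize ⟪·, w⟫ over Bset s R
  obtain ⟨u0, hu0, hmin0⟩ := (Bset_compact hRf).exists_isMinOn ⟨u₁, hu₁⟩
    ((Continuous.inner continuous_id continuous_const).continuousOn
      (f := fun v : V => ⟪v, w⟫))
  set lam := ⟪u0, w⟫ with hlam
  have hXsub : R ⊆ Hp (w - lam • t0 s) :=
    ratio_face hRf hwM (fun u hu => hmin0 hu)
  set X' := R ∩ Hz (w - lam • t0 s) with hX'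
  have hX'f : IsFaceOf X' (Ks s) := face_cut hRf hXsub
  have hMX' : perpS s ⊂ X' := by
    refine lt_of_le_of_ne ?_ ?_
    · intro m hm
      refine ⟨Mf_subset_face hRf hm, ?_⟩
      simp only [Hz, Set.mem_setOf_eq, inner_sub_right, real_inner_smul_right]
      rw [hwM m hm, t0_perp hm]
      ring
    · intro heq
      have : u0 ∈ X' := by
        refine ⟨hu0.1.1, ?_⟩
        simp only [Hz, Set.mem_setOf_eq, inner_sub_right, real_inner_smul_right, Bset_t0 hu0]
        rw [← hlam]; ring
      rw [← heq] at this
      exact Bset_not_mem_Mf hu0 this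
  have hX'R : X' = R := hmin X' (isFace_iff_mem_Fas.1 hX'f) hMX' Set.inter_subset_left
  -- both u₁, u₂ lie in X', forcing equal inner products with w
  have hval : ∀ u ∈ Bset s R, ⟪u, w⟫ = lam := by
    intro u hu
    have : u ∈ X' := by rw [hX'R]; exact hu.1.1
    have h2 := this.2
    simp only [Hz, Set.mem_setOf_eq, inner_sub_right, real_inner_smul_right, Bset_t0 hu] at h2
    linarith
  have e1 := hval u₁ hu₁
  have e2 := hval u₂ hu₂
  have : ⟪u₁ - u₂, w⟫ = 0 := by rw [inner_sub_left, e1, e2]; ring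
  rw [hw] at this
  exact hne (sub_eq_zero.1 (inner_self_eq_zero.1 this))

lemma ratio_face_max {s : Finset V} {X : Set V} {w : V} {lam : ℝ} (hX : IsFaceOf X (Ks s))
    (hwM : ∀ m ∈ perpS s, ⟪m, w⟫ = 0) (hmax : ∀ u ∈ Bset s X, ⟪u, w⟫ ≤ lam) :
    X ⊆ Hp (lam • t0 s - w) := by
  have h := ratio_face (w := -w) (lam := -lam) hX
    (fun m hm => by rw [inner_neg_right, hwM m hm]; ring)
    (fun u hu => by rw [inner_neg_right]; linarith [hmax u hu])
  have heq : -w - (-lam) • t0 s = lam • t0 s - w := by module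
  rwa [heq] at h

lemma two_minF {s : Finset V} {X : Set V} (hX : X ∈ Fas s) (hMX : perpS s ⊂ X)
    (hnm : X ∉ MinF s) :
    ∃ R₁ ∈ MinF s, ∃ R₂ ∈ MinF s, R₁ ⊆ X ∧ R₂ ⊆ X ∧ R₁ ≠ R₂ := by
  classical
  have hXf : IsFaceOf X (Ks s) := isFace_iff_mem_Fas.2 hX
  -- extract an intermediate face Y
  have hY : ∃ Y ∈ Fas s, perpS s ⊂ Y ∧ Y ⊆ X ∧ Y ≠ X := by
    by_contra hcon
    push_neg at hcon
    exact hnm (Finset.mem_filter.2 ⟨hX, hMX, fun F hF hMF hFX => hcon F hF hMF hFX⟩)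
  obtain ⟨Y, hYm, hMY, hYX, hYne⟩ := hY
  have hYf : IsFaceOf Y (Ks s) := isFace_iff_mem_Fas.2 hYm
  -- a constraint active on Y but not on X
  have hw0 : ∃ w₀ ∈ TsF s Y, w₀ ∉ TsF s X := by
    by_contra hcon
    push_neg at hcon
    apply hYne
    rw [face_eq_faceT hYf, face_eq_faceT hXf,
      Finset.Subset.antisymm (TsF_anti hYX) hcon]
  obtain ⟨w₀, hw₀Y, hw₀X⟩ := hw0
  have hw₀s : w₀ ∈ s := TsF_subset s Y hw₀Y
  have hw₀M : ∀ m ∈ perpS s, ⟪m, w₀⟫ = 0 := fun m hm => hm w₀ hw₀s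
  -- maximize ⟪·, w₀⟫ over Bset s X
  have hBne : (Bset s X).Nonempty := B_nonempty hXf
    (fun hsub => (lt_irrefl _ (lt_of_lt_of_le hMX hsub)).elim)
  obtain ⟨u0, hu0, hmax0⟩ := (Bset_compact hXf).exists_isMaxOn hBne
    ((Continuous.inner continuous_id continuous_const).continuousOn
      (f := fun v : V => ⟪v, w₀⟫))
  set lam := ⟪u0, w₀⟫ with hlam
  have hlampos : 0 < lam := by
    -- some x ∈ X with ⟪x, w₀⟫ > 0
    have : ∃ x ∈ X, ⟪x, w₀⟫ ≠ 0 := by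
      by_contra hcon
      push_neg at hcon
      exact hw₀X (mem_TsF.2 ⟨hw₀s, hcon⟩)
    obtain ⟨x, hx, hxne⟩ := this
    have hxpos : 0 < ⟪x, w₀⟫ := lt_of_le_of_ne (face_subset hXf hx w₀ hw₀s) (Ne.symm hxne)
    have hxM : x ∉ perpS s := fun hm => hxne (hm w₀ hw₀s)
    obtain ⟨u', hu', hτ, hppx⟩ := scale_mem_Bset hXf hx hxM
    have h1 : ⟪x, w₀⟫ = ⟪x, t0 s⟫ * ⟪u', w₀⟫ := by
      rw [← pp_inner hw₀M x, hppx, real_inner_smul_left]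
    have h2 : 0 < ⟪u', w₀⟫ := by nlinarith
    have := hmax0 hu'
    simp only [Set.mem_setOf_eq] at this
    exact lt_of_lt_of_le h2 this
  have hsubX : X ⊆ Hp (lam • t0 s - w₀) :=
    ratio_face_max hXf hw₀M (fun u hu => hmax0 hu)
  set X'' := X ∩ Hz (lam • t0 s - w₀) with hX''
  have hX''f : IsFaceOf X'' (Ks s) := face_cut hXf hsubX
  have hMX'' : perpS s ⊂ X'' := by
    refine lt_of_le_of_ne ?_ ?_
    · intro m hm
      refine ⟨Mf_subset_face hXf hm, ?_⟩
      simp only [Hz, Set.mem_setOf_eq, inner_sub_right, real_inner_smul_right]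
      rw [hw₀M m hm, t0_perp hm]; ring
    · intro heq
      have hu0X : u0 ∈ X'' := by
        refine ⟨hu0.1.1, ?_⟩
        simp only [Hz, Set.mem_setOf_eq, inner_sub_right, real_inner_smul_right, Bset_t0 hu0]
        rw [← hlam]; ring
      rw [← heq] at hu0X
      exact Bset_not_mem_Mf hu0 hu0X
  obtain ⟨R₁, hR₁, hR₁Y⟩ := exists_minF_le hYm hMY
  obtain ⟨R₂, hR₂, hR₂X''⟩ := exists_minF_le (isFace_iff_mem_Fas.1 hX''f) hMX''
  refine ⟨R₁, hR₁, R₂, hR₂, hR₁Y.trans hYX, hR₂X''.trans Set.inter_subset_left, ?_⟩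
  intro hReq
  -- Bset points
  have hMR₁ := (Finset.mem_filter.1 hR₁).2.1
  have hR₁f : IsFaceOf R₁ (Ks s) := isFace_iff_mem_Fas.2 (Finset.mem_filter.1 hR₁).1
  obtain ⟨u₁, hu₁⟩ := B_nonempty hR₁f
    (fun hsub => (lt_irrefl _ (lt_of_lt_of_le hMR₁ hsub)).elim)
  have hu₁Y : u₁ ∈ Y := hR₁Y hu₁.1.1
  have hu₁w : ⟪u₁, w₀⟫ = 0 := (mem_TsF.1 hw₀Y).2 u₁ hu₁Y
  -- u₁ also lies in Bset s R₂ = Bset s R₁ ∋ u₁ and R₂ ⊆ X''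
  have hu₁X'' : u₁ ∈ X'' := by rw [hReq] at hu₁; exact hR₂X'' hu₁.1.1
  have := hu₁X''.2
  simp only [Hz, Set.mem_setOf_eq, inner_sub_right, real_inner_smul_right, Bset_t0 hu₁] at this
  rw [hu₁w] at this
  -- this : lam * 1 - 0 = 0
  rw [mul_one, sub_zero] at this
  exact (ne_of_gt hlampos) this

lemma exists_inner_ne (D : Finset V) (hD : ∀ d ∈ D, d ≠ (0:V)) :
    ∃ l : V, ∀ d ∈ D, ⟪d, l⟫ ≠ 0 := by
  classical
  induction D using Finset.induction_on with
  | empty => exact ⟨0, by simp⟩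
  | @insert p D hp ih =>
    obtain ⟨l, hl⟩ := ih (fun d hd => hD d (Finset.mem_insert_of_mem hd))
    have hp0 : p ≠ 0 := hD p (Finset.mem_insert_self _ _)
    set bad : Finset ℝ := (insert p D).image (fun q => -⟪q, l⟫ / ⟪q, p⟫) with hbad
    obtain ⟨ε, hε⟩ := Infinite.exists_notMem_finset bad
    refine ⟨l + ε • p, ?_⟩
    intro q hq hzero
    rw [inner_add_right, real_inner_smul_right] at hzero
    by_cases hqp : ⟪q, p⟫ = 0
    · rw [hqp, mul_zero, add_zero] at hzero
      rcases Finset.mem_insert.1 hq with rfl | hq'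
      · exact hp0 (inner_self_eq_zero.1 hqp)
      · exact hl q hq' hzero
    · apply hε
      rw [hbad]
      refine Finset.mem_image.2 ⟨q, hq, ?_⟩
      field_simp
      linarith

lemma exists_generic (U : Finset V) :
    ∃ l : V, ∀ a ∈ U, ∀ b ∈ U, a ≠ b → ⟪a, l⟫ ≠ ⟪b, l⟫ := by
  classical
  set D := ((U ×ˢ U).filter (fun p => p.1 ≠ p.2)).image (fun p => p.1 - p.2) with hD
  have hD0 : ∀ d ∈ D, d ≠ (0:V) := by
    intro d hd
    obtain ⟨⟨a, b⟩, hab, rfl⟩ := Finset.mem_image.1 hd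
    have := (Finset.mem_filter.1 hab).2
    exact sub_ne_zero.2 this
  obtain ⟨l, hl⟩ := exists_inner_ne D hD0
  refine ⟨l, ?_⟩
  intro a ha b hb hne heq
  have hmem : a - b ∈ D := Finset.mem_image.2 ⟨(a, b),
    Finset.mem_filter.2 ⟨Finset.mem_product.2 ⟨ha, hb⟩, hne⟩, rfl⟩
  apply hl (a - b) hmem
  rw [inner_sub_left, heq]; ring

/- ## rank bookkeeping -/

lemma sdim_Mf (T : Finset V) : sdim (perpS T) = Module.finrank ℝ (pSub T) := by
  rw [sdim, show Submodule.span ℝ (perpS T) = pSub T from Submodule.span_eq (pSub T)]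

lemma pSub_le_span (s : Finset V) : pSub s ≤ Submodule.span ℝ (Ks s) := by
  intro v hv
  exact Submodule.subset_span (perpS_subset_Ks hv)

lemma span_loc_le {s : Finset V} {H : Set V} (hH : IsFaceOf H (Ks s)) :
    Submodule.span ℝ (Ks (TsF s H)) ≤ Submodule.span ℝ (Ks s) := by
  obtain ⟨z, hzH, hz0, hzpos⟩ := exists_int_pt (face_subset hH) (face_zero hH)
    (fun a ha b hb => face_add hH ha hb)
  rw [Submodule.span_le]
  intro v hv
  obtain ⟨ε, hε, hmem⟩ := loc_push hz0 hzpos hv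
  have hv' : v = ε⁻¹ • ((z + ε • v) - z) := by
    match_scalars <;> field_simp <;> ring
  rw [hv']
  exact Submodule.smul_mem _ _ (Submodule.sub_mem _ (Submodule.subset_span hmem)
    (Submodule.subset_span (face_subset hH hzH)))

lemma Ks_insert (g : V) (s : Finset V) : Ks (insert g s) = Ks s ∩ Hp g := by
  ext v
  simp only [Ks, Hp, Set.mem_setOf_eq, Set.mem_inter_iff, Finset.mem_insert]
  constructor
  · intro h
    exact ⟨fun t ht => h t (Or.inr ht), h g (Or.inl rfl)⟩
  · rintro ⟨h1, h2⟩ t (rfl | ht)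
    exacts [h2, h1 t ht]

lemma perpS_insert {g : V} {s : Finset V} (h : perpS s ⊆ Hz g) :
    perpS (insert g s) = perpS s := by
  ext v
  simp only [perpS, Set.mem_setOf_eq, Finset.mem_insert]
  constructor
  · intro hv t ht
    exact hv t (Or.inr ht)
  · rintro hv t (rfl | ht)
    · exact h hv
    · exact hv t ht

lemma rank_lb_of_ne {s : Finset V} (hne : Ks s ≠ perpS s) :
    Module.finrank ℝ (pSub s) + 1 ≤ Module.finrank ℝ (Submodule.span ℝ (Ks s)) := by
  have hle : pSub s ≤ Submodule.span ℝ (Ks s) := pSub_le_span s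
  have hlt : pSub s < Submodule.span ℝ (Ks s) := by
    refine lt_of_le_of_ne hle ?_
    intro heq
    apply hne
    apply Set.Subset.antisymm
    · intro v hv
      have : v ∈ (Submodule.span ℝ (Ks s) : Set V) := Submodule.subset_span hv
      rw [← heq] at this
      exact this
    · exact fun v hv => perpS_subset_Ks hv
  exact Nat.succ_le_of_lt (Submodule.finrank_lt_finrank_of_lt hlt)

lemma sdim_minF {s : Finset V} {R : Set V} (hR : R ∈ MinF s) :
    sdim R = Module.finrank ℝ (pSub s) + 1 := by
  classical
  rcases Finset.mem_filter.1 hR with ⟨hRm, hMR, _⟩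
  have hRf : IsFaceOf R (Ks s) := isFace_iff_mem_Fas.2 hRm
  obtain ⟨u, hu⟩ := B_nonempty hRf
    (fun hsub => (lt_irrefl _ (lt_of_lt_of_le hMR hsub)).elim)
  have hu0 : u ≠ 0 := by
    intro h
    have := Bset_t0 hu
    rw [h] at this
    simp at this
  have huM : u ∉ perpS s := Bset_not_mem_Mf hu
  have hspan : Submodule.span ℝ R = pSub s ⊔ (ℝ ∙ u) := by
    apply le_antisymm
    · rw [Submodule.span_le]
      intro v hv
      by_cases hvM : v ∈ perpS s
      · exact Submodule.mem_sup_left hvM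
      · obtain ⟨u', hu', hτ, hppv⟩ := scale_mem_Bset hRf hv hvM
        have huu : u' = u := minF_unique_B hR u' hu' u hu
        rw [huu] at hppv
        have hdecomp : v = ↑(Submodule.orthogonalProjectionOnto (pSub s) v) + ⟪v, t0 s⟫ • u := by
          rw [← hppv, pp]; abel
        rw [hdecomp]
        exact Submodule.add_mem _ (Submodule.mem_sup_left (SetLike.coe_mem _))
          (Submodule.mem_sup_right (Submodule.smul_mem _ _ (Submodule.mem_span_singleton_self u)))
    · apply sup_le
      · intro v hv
        exact Submodule.subset_span (Mf_subset_face hRf hv)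
      · rw [Submodule.span_singleton_le_iff_mem]
        exact Submodule.subset_span hu.1.1
  have hinf : pSub s ⊓ (ℝ ∙ u) = ⊥ := by
    rw [eq_bot_iff]
    intro x hx
    obtain ⟨c, rfl⟩ := Submodule.mem_span_singleton.1 hx.2
    by_cases hc : c = 0
    · simp [hc]
    · exfalso
      apply huM
      have : u = c⁻¹ • (c • u) := by rw [smul_smul, inv_mul_cancel₀ hc, one_smul]
      rw [this]
      exact perpS_smul _ hx.1
  have := Submodule.finrank_sup_add_finrank_inf_eq (pSub s) (ℝ ∙ u)
  rw [hinf] at this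
  simp only [finrank_bot, add_zero] at this
  rw [sdim, hspan, this, finrank_span_singleton hu0]

lemma sig_insert {s : Finset V} {g : V} (hsub : perpS s ⊆ Hz g) :
    sig s g = sig (insert g s) g := by
  classical
  rw [sig, sig, perpS_insert hsub]
  congr 1
  apply Finset.ext
  intro F
  simp only [Finset.mem_filter]
  constructor
  · rintro ⟨hFm, h1, h2⟩
    have hFf := isFace_iff_mem_Fas.2 hFm
    refine ⟨?_, h1, h2⟩
    obtain ⟨w, hw, hFw⟩ := hFf
    rw [← isFace_iff_mem_Fas]
    refine ⟨w, ?_, ?_⟩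
    · intro v hv
      exact hw (((Ks_insert g s) ▸ hv).1)
    · rw [Ks_insert]
      ext v
      constructor
      · intro hv
        have hv' := hFw ▸ hv
        exact ⟨⟨hv'.1, h1 hv⟩, hv'.2⟩
      · rintro ⟨⟨hvK, _⟩, hvz⟩
        rw [hFw]
        exact ⟨hvK, hvz⟩
  · rintro ⟨hFm, h1, h2⟩
    have hFf := isFace_iff_mem_Fas.2 hFm
    refine ⟨?_, h1, h2⟩
    set T := TsF (insert g s) F with hT
    have hFT : F = faceT (insert g s) T := face_eq_faceT hFf
    by_cases hFz : F ⊆ Hz g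
    · -- F = perpS s
      have hFM : F = perpS s := by
        apply Set.Subset.antisymm
        · intro v hv
          rw [← h2]
          exact ⟨hv, hFz hv⟩
        · rw [← h2]
          exact Set.inter_subset_left
      rw [hFM, ← isFace_iff_mem_Fas]
      exact Mf_isFace s
    · obtain ⟨x, hx, hxz⟩ := Set.not_subset.1 hFz
      have hxpos : 0 < ⟪x, g⟫ := lt_of_le_of_ne (h1 hx) (fun he => hxz he.symm)
      have hgT : g ∉ T := by
        intro hgT
        exact hxz ((mem_TsF.1 hgT).2 x hx)
      have hTs : T ⊆ s := by
        intro t ht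
        rcases Finset.mem_insert.1 (TsF_subset _ _ ht) with rfl | h
        · exact absurd ht hgT
        · exact h
      set F₁ := faceT s T with hF₁def
      have hF₁f : IsFaceOf F₁ (Ks s) := faceT_isFace hTs
      have hFF₁ : F = F₁ ∩ Hp g := by
        rw [hFT, faceT, Ks_insert, hF₁def, faceT]
        ext v
        constructor
        · rintro ⟨⟨h1', h2'⟩, h3'⟩
          exact ⟨⟨h1', h3'⟩, h2'⟩
        · rintro ⟨⟨h1', h3'⟩, h2'⟩
          exact ⟨⟨h1', h2'⟩, h3'⟩
      have hF₁Hp : F₁ ⊆ Hp g := by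
        intro f hf
        by_contra hneg
        have hfg : ⟪f, g⟫ < 0 := lt_of_not_ge hneg
        set μ := ⟪x, g⟫ / (-⟪f, g⟫) with hμ
        have hμpos : 0 < μ := div_pos hxpos (by linarith)
        have hxF₁ : x ∈ F₁ := by
          rw [hFF₁] at hx; exact hx.1
        have hpF₁ : x + μ • f ∈ F₁ := face_add hF₁f hxF₁ (face_smul hF₁f (le_of_lt hμpos) hf)
        have hfg0 : ⟪f, g⟫ ≠ 0 := ne_of_lt hfg
        have hpg : ⟪x + μ • f, g⟫ = 0 := by
          rw [inner_add_left, real_inner_smul_left, hμ, div_mul_eq_mul_div, mul_div_assoc,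
            div_neg, div_self hfg0]
          ring
        have hpF : x + μ • f ∈ F := by
          rw [hFF₁]
          exact ⟨hpF₁, le_of_eq hpg.symm⟩
        have hpM : x + μ • f ∈ perpS s := by
          rw [← h2]
          exact ⟨hpF, hpg⟩
        have hfneg : -f ∈ Ks s := by
          have hrep : -f = μ⁻¹ • (x + -(x + μ • f)) := by
            match_scalars <;> field_simp <;> ring
          rw [hrep]
          exact Ks_smul (le_of_lt (inv_pos.2 hμpos)) (Ks_add (faceT_subset_Ks hxF₁)
            (perpS_subset_Ks (perpS_neg hpM)))
        have : f ∈ perpS s := mem_Mf_of_pm (faceT_subset_Ks hf) hfneg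
        have : ⟪f, g⟫ = 0 := hsub this
        linarith
      rw [hFF₁, Set.inter_eq_self_of_subset_left hF₁Hp, ← isFace_iff_mem_Fas]
      exact hF₁f

theorem main_ind (d : ℕ) : ∀ s : Finset V,
    Module.finrank ℝ (Submodule.span ℝ (Ks s)) ≤ d + Module.finrank ℝ (pSub s) →
    (Ks s ≠ perpS s → chi s = 0) ∧
    (∀ g : V, (∃ q ∈ Ks s, 0 < ⟪q, g⟫) → sig s g = 0) := by
  classical
  induction d using Nat.strong_induction_on with
  | _ d IH =>
  have hPE : ∀ s : Finset V,
      Module.finrank ℝ (Submodule.span ℝ (Ks s)) ≤ d + Module.finrank ℝ (pSub s) →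
      Ks s ≠ perpS s → chi s = 0 := by
    intro s hd hne
    have hMface : IsFaceOf (perpS s) (Ks s) := Mf_isFace s
    have hMmem : perpS s ∈ Fas s := isFace_iff_mem_Fas.1 hMface
    have hd1 : 1 ≤ d := by
      have := rank_lb_of_ne hne
      omega
    have hufex : ∀ R ∈ MinF s, (Bset s R).Nonempty := by
      intro R hR
      rcases Finset.mem_filter.1 hR with ⟨hRm, hMR, _⟩
      exact B_nonempty (isFace_iff_mem_Fas.2 hRm)
        (fun hsubM => absurd (lt_of_lt_of_le hMR hsubM) (lt_irrefl _))
    choose! uf hufB using hufex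
    have hufuniq : ∀ R ∈ MinF s, ∀ u ∈ Bset s R, u = uf R :=
      fun R hR u hu => minF_unique_B hR u hu (uf R) (hufB R hR)
    have hminface : ∀ R ∈ MinF s, IsFaceOf R (Ks s) :=
      fun R hR => isFace_iff_mem_Fas.2 (Finset.mem_filter.1 hR).1
    have hufinj : ∀ R₁ ∈ MinF s, ∀ R₂ ∈ MinF s, uf R₁ = uf R₂ → R₁ = R₂ := by
      intro R₁ h₁ R₂ h₂ he
      by_contra hne'
      have hint : IsFaceOf (R₁ ∩ R₂) (Ks s) := face_inter (hminface R₁ h₁) (hminface R₂ h₂)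
      have hu1 : uf R₁ ∈ R₁ ∩ R₂ := ⟨(hufB R₁ h₁).1.1, by rw [he]; exact (hufB R₂ h₂).1.1⟩
      have hMint : perpS s ⊂ R₁ ∩ R₂ := by
        refine lt_of_le_of_ne (Set.subset_inter (Mf_subset_face (hminface R₁ h₁))
          (Mf_subset_face (hminface R₂ h₂))) ?_
        intro heq
        exact Bset_not_mem_Mf (hufB R₁ h₁) (heq ▸ hu1)
      have e₁ : R₁ ∩ R₂ = R₁ := (Finset.mem_filter.1 h₁).2.2 _ (isFace_iff_mem_Fas.1 hint)
        hMint Set.inter_subset_left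
      have e₂ : R₁ ∩ R₂ = R₂ := (Finset.mem_filter.1 h₂).2.2 _ (isFace_iff_mem_Fas.1 hint)
        hMint Set.inter_subset_right
      exact hne' (e₁.symm.trans e₂)
    -- generic functional, orthogonal to the minimal face
    obtain ⟨l₀, hl₀⟩ := exists_generic ((MinF s).image uf)
    set l : V := pp s l₀ with hldef
    have hlM : ∀ m ∈ perpS s, ⟪m, l⟫ = 0 :=
      fun m hm => (Submodule.mem_orthogonal _ _).1 (pp_mem_orth s l₀) m hm
    have hltrans : ∀ R ∈ MinF s, ⟪uf R, l⟫ = ⟪uf R, l₀⟫ := by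
      intro R hR
      have huo : uf R ∈ (pSub s)ᗮ := (hufB R hR).1.2
      rw [hldef, pp, inner_sub_right]
      have h0 : ⟪uf R, (Submodule.orthogonalProjectionOnto (pSub s) l₀ : V)⟫ = 0 := by
        rw [real_inner_comm]
        exact (Submodule.mem_orthogonal _ _).1 huo _ (SetLike.coe_mem _)
      rw [h0]; ring
    have hlgen : ∀ R₁ ∈ MinF s, ∀ R₂ ∈ MinF s, R₁ ≠ R₂ → ⟪uf R₁, l⟫ ≠ ⟪uf R₂, l⟫ := by
      intro R₁ h₁ R₂ h₂ hne' he
      rw [hltrans R₁ h₁, hltrans R₂ h₂] at he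
      exact hl₀ (uf R₁) (Finset.mem_image_of_mem uf h₁) (uf R₂)
        (Finset.mem_image_of_mem uf h₂) (fun h => hne' (hufinj R₁ h₁ R₂ h₂ h)) he
    -- each minimal face lies in the zero set of its own functional
    have hRz : ∀ R ∈ MinF s, R ⊆ Hz (l - ⟪uf R, l⟫ • t0 s) := by
      intro R hR v hv
      simp only [Hz, Set.mem_setOf_eq, inner_sub_right, real_inner_smul_right]
      by_cases hvM : v ∈ perpS s
      · rw [hlM v hvM, t0_perp hvM]; ring
      · obtain ⟨u', hu', hτ, hppv⟩ := scale_mem_Bset (hminface R hR) hv hvM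
        rw [hufuniq R hR u' hu'] at hppv
        have h1 : ⟪v, l⟫ = ⟪v, t0 s⟫ * ⟪uf R, l⟫ := by
          rw [← pp_inner hlM v, hppv, real_inner_smul_left]
        rw [h1]; ring
    -- existence and uniqueness of the classifying minimal face of any nontrivial face
    have hfiber : ∀ F ∈ (Fas s).erase (perpS s), ∃ R,
        (R ∈ MinF s ∧ F ⊆ Hp (l - ⟪uf R, l⟫ • t0 s) ∧ F ∩ Hz (l - ⟪uf R, l⟫ • t0 s) = R) ∧
        ∀ R', (R' ∈ MinF s ∧ F ⊆ Hp (l - ⟪uf R', l⟫ • t0 s) ∧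
          F ∩ Hz (l - ⟪uf R', l⟫ • t0 s) = R') → R' = R := by
      intro F hFe
      rcases Finset.mem_erase.1 hFe with ⟨hFne, hFm⟩
      have hFf := isFace_iff_mem_Fas.2 hFm
      have hMF : perpS s ⊂ F := lt_of_le_of_ne (Mf_subset_face hFf) (Ne.symm hFne)
      have hBne : (Bset s F).Nonempty := B_nonempty hFf
        (fun hsubM => absurd (lt_of_lt_of_le hMF hsubM) (lt_irrefl _))
      obtain ⟨u1, hu1, hmin1⟩ := (Bset_compact hFf).exists_isMinOn hBne
        ((Continuous.inner continuous_id continuous_const).continuousOn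
          (f := fun v : V => ⟪v, l⟫))
      set lam := ⟪u1, l⟫ with hlamdef
      have hFsub : F ⊆ Hp (l - lam • t0 s) := ratio_face hFf hlM (fun u hu => hmin1 hu)
      set X' := F ∩ Hz (l - lam • t0 s) with hX'def
      have hX'f : IsFaceOf X' (Ks s) := face_cut hFf hFsub
      have hu1X' : u1 ∈ X' := by
        refine ⟨hu1.1.1, ?_⟩
        simp only [Hz, Set.mem_setOf_eq, inner_sub_right, real_inner_smul_right, Bset_t0 hu1]
        rw [← hlamdef]; ring
      have hMX' : perpS s ⊂ X' := by
        refine lt_of_le_of_ne ?_ ?_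
        · intro m hm
          refine ⟨Mf_subset_face hFf hm, ?_⟩
          simp only [Hz, Set.mem_setOf_eq, inner_sub_right, real_inner_smul_right]
          rw [hlM m hm, t0_perp hm]; ring
        · intro heq
          exact Bset_not_mem_Mf hu1 (heq ▸ hu1X')
      -- the cut is a minimal face, by genericity
      have hval : ∀ R ∈ MinF s, R ⊆ X' → ⟪uf R, l⟫ = lam := by
        intro R hR hRX'
        have h1 : uf R ∈ X' := hRX' (hufB R hR).1.1
        have h2 := h1.2
        simp only [Hz, Set.mem_setOf_eq, inner_sub_right, real_inner_smul_right,
          Bset_t0 (hufB R hR)] at h2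
        linarith
      have hX'min : X' ∈ MinF s := by
        by_contra hnm
        obtain ⟨R₁, h₁, R₂, h₂, hs₁, hs₂, hne12⟩ :=
          two_minF (isFace_iff_mem_Fas.1 hX'f) hMX' hnm
        exact hlgen R₁ h₁ R₂ h₂ hne12 (by rw [hval R₁ h₁ hs₁, hval R₂ h₂ hs₂])
      have hlamX' : ⟪uf X', l⟫ = lam := hval X' hX'min (le_refl X')
      refine ⟨X', ⟨hX'min, by rwa [hlamX'], by rw [hlamX']⟩, ?_⟩
      rintro R ⟨hR, hR1, hR2⟩
      have hRX : R ⊆ F := by rw [← hR2]; exact Set.inter_subset_left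
      have hub : uf R ∈ Bset s F := Bset_mono hRX (hufB R hR)
      have hge : lam ≤ ⟪uf R, l⟫ := hmin1 hub
      have hle : ⟪uf R, l⟫ ≤ lam := by
        have h5 := hR1 hu1.1.1
        simp only [Hp, Set.mem_setOf_eq, inner_sub_right, real_inner_smul_right,
          Bset_t0 hu1] at h5
        rw [← hlamdef] at h5
        linarith
      have heq : ⟪uf R, l⟫ = lam := le_antisymm hle hge
      rw [heq] at hR2
      rw [← hR2]
    choose! mfun hmfun1 hmfun2 using hfiber
    -- decompose chi over the fibers
    have hfib_eq : ∀ R ∈ MinF s,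
        ((Fas s).erase (perpS s)).filter (fun F => mfun F = R)
          = (Fas s).filter (fun F => F ⊆ Hp (l - ⟪uf R, l⟫ • t0 s) ∧
              F ∩ Hz (l - ⟪uf R, l⟫ • t0 s) = R) := by
      intro R hR
      apply Finset.ext
      intro F
      simp only [Finset.mem_filter, Finset.mem_erase]
      constructor
      · rintro ⟨⟨hFne, hFm⟩, hmF⟩
        have h1 := hmfun1 F (Finset.mem_erase.2 ⟨hFne, hFm⟩)
        rw [hmF] at h1
        exact ⟨hFm, h1.2.1, h1.2.2⟩
      · rintro ⟨hFm, h1, h2⟩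
        have hFne : F ≠ perpS s := by
          intro he
          rcases Finset.mem_filter.1 hR with ⟨_, hMR, _⟩
          have : R ⊆ perpS s := by rw [← he, ← h2]; exact Set.inter_subset_left
          exact absurd (lt_of_lt_of_le hMR this) (lt_irrefl _)
        exact ⟨⟨hFne, hFm⟩, (hmfun2 F (Finset.mem_erase.2 ⟨hFne, hFm⟩) R ⟨hR, h1, h2⟩).symm⟩
    have hsum : chi s = (-1:ℝ)^(sdim (perpS s))
        + ∑ R ∈ MinF s, sig (TsF s R) (l - ⟪uf R, l⟫ • t0 s) := by
      rw [chi, ← Finset.add_sum_erase (Fas s) _ hMmem]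
      congr 1
      have hmapsto : ∀ F ∈ (Fas s).erase (perpS s), mfun F ∈ MinF s :=
        fun F hF => (hmfun1 F hF).1
      rw [← Finset.sum_fiberwise_of_maps_to hmapsto (fun F => (-1:ℝ)^(sdim F))]
      apply Finset.sum_congr rfl
      intro R hR
      rw [hfib_eq R hR]
      exact loc_sum (hminface R hR) (hRz R hR)
    -- evaluation of the summands
    have hgoodeval : ∀ R ∈ MinF s,
        (∃ p ∈ Ks (TsF s R), 0 < ⟪p, l - ⟪uf R, l⟫ • t0 s⟫) →
        sig (TsF s R) (l - ⟪uf R, l⟫ • t0 s) = 0 := by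
      intro R hR hpos
      have hRf := hminface R hR
      have h1 : Module.finrank ℝ (Submodule.span ℝ (Ks (TsF s R)))
          ≤ Module.finrank ℝ (Submodule.span ℝ (Ks s)) :=
        Submodule.finrank_mono (span_loc_le hRf)
      have h2 : Module.finrank ℝ (pSub (TsF s R)) = sdim R := (sdim_face hRf).symm
      have h3 : sdim R = Module.finrank ℝ (pSub s) + 1 := sdim_minF hR
      have hbound : Module.finrank ℝ (Submodule.span ℝ (Ks (TsF s R)))
          ≤ (d - 1) + Module.finrank ℝ (pSub (TsF s R)) := by omega
      exact (IH (d - 1) (by omega) _ hbound).2 _ hpos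
    have hbadeval : ∀ R ∈ MinF s,
        (∀ p ∈ Ks (TsF s R), ⟪p, l - ⟪uf R, l⟫ • t0 s⟫ ≤ 0) →
        sig (TsF s R) (l - ⟪uf R, l⟫ • t0 s) = (-1:ℝ)^(sdim (perpS s) + 1) := by
      intro R hR hneg
      have hRf := hminface R hR
      have hMz : perpS (TsF s R) ⊆ Hz (l - ⟪uf R, l⟫ • t0 s) :=
        span_subset_Hz hRf (hRz R hR)
      have hfilt : (Fas (TsF s R)).filter (fun F => F ⊆ Hp (l - ⟪uf R, l⟫ • t0 s) ∧
          F ∩ Hz (l - ⟪uf R, l⟫ • t0 s) = perpS (TsF s R)) = {perpS (TsF s R)} := by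
        apply Finset.ext
        intro F
        simp only [Finset.mem_filter, Finset.mem_singleton]
        constructor
        · rintro ⟨hFm, h1, h2⟩
          rw [← h2]
          have hFz : F ⊆ Hz (l - ⟪uf R, l⟫ • t0 s) := by
            intro v hv
            exact le_antisymm (hneg v (face_subset (isFace_iff_mem_Fas.2 hFm) hv)) (h1 hv)
          rw [Set.inter_eq_self_of_subset_left hFz]
        · intro he
          subst he
          refine ⟨isFace_iff_mem_Fas.1 (Mf_isFace _), ?_, ?_⟩
          · exact fun v hv => le_of_eq (hMz hv).symm
          · exact Set.inter_eq_self_of_subset_left hMz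
      rw [sig, hfilt, Finset.sum_singleton, sdim_Mf, ← sdim_face hRf, sdim_minF hR, sdim_Mf]
    -- the maximal minimal face
    have hKsf := Ks_isFace_self s
    have hBC : (Bset s (Ks s)).Nonempty := B_nonempty hKsf
      (fun hsubM => hne (Set.Subset.antisymm hsubM (fun v hv => perpS_subset_Ks hv)))
    obtain ⟨u2, hu2, hmax2⟩ := (Bset_compact hKsf).exists_isMaxOn hBC
      ((Continuous.inner continuous_id continuous_const).continuousOn
        (f := fun v : V => ⟪v, l⟫))
    set lamC := ⟪u2, l⟫ with hlamC
    have hCsub : Ks s ⊆ Hp (lamC • t0 s - l) := ratio_face_max hKsf hlM (fun u hu => hmax2 hu)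
    set Xm := Ks s ∩ Hz (lamC • t0 s - l) with hXm
    have hXmf : IsFaceOf Xm (Ks s) := face_cut hKsf hCsub
    have hu2Xm : u2 ∈ Xm := by
      refine ⟨hu2.1.1, ?_⟩
      simp only [Hz, Set.mem_setOf_eq, inner_sub_right, real_inner_smul_right, Bset_t0 hu2]
      rw [← hlamC]; ring
    have hMXm : perpS s ⊂ Xm := by
      refine lt_of_le_of_ne ?_ ?_
      · intro m hm
        refine ⟨perpS_subset_Ks hm, ?_⟩
        simp only [Hz, Set.mem_setOf_eq, inner_sub_right, real_inner_smul_right]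
        rw [hlM m hm, t0_perp hm]; ring
      · intro heq
        exact Bset_not_mem_Mf hu2 (heq ▸ hu2Xm)
    obtain ⟨Rm, hRm, hRmX⟩ := exists_minF_le (isFace_iff_mem_Fas.1 hXmf) hMXm
    have hlamRm : ⟪uf Rm, l⟫ = lamC := by
      have h1 : uf Rm ∈ Xm := hRmX (hufB Rm hRm).1.1
      have h2 := h1.2
      simp only [Hz, Set.mem_setOf_eq, inner_sub_right, real_inner_smul_right,
        Bset_t0 (hufB Rm hRm)] at h2
      linarith
    have hbadRm : ∀ p ∈ Ks (TsF s Rm), ⟪p, l - ⟪uf Rm, l⟫ • t0 s⟫ ≤ 0 := by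
      intro p hp
      by_contra hcon
      push_neg at hcon
      have hRmf := hminface Rm hRm
      obtain ⟨z, hzR, hz0, hzpos⟩ := exists_int_pt (face_subset hRmf) (face_zero hRmf)
        (fun a ha b hb => face_add hRmf ha hb)
      obtain ⟨ε, hε, hzp⟩ := loc_push hz0 hzpos hp
      set c := z + ε • p with hc
      have hzg : ⟪z, l - ⟪uf Rm, l⟫ • t0 s⟫ = 0 := hRz Rm hRm hzR
      have hcg : 0 < ⟪c, l - ⟪uf Rm, l⟫ • t0 s⟫ := by
        rw [hc, inner_add_left, real_inner_smul_left, hzg]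
        have : 0 < ε * ⟪p, l - ⟪uf Rm, l⟫ • t0 s⟫ := mul_pos hε hcon
        linarith
      have hcM : c ∉ perpS s := by
        intro hm
        rw [inner_sub_right, real_inner_smul_right, hlM c hm, t0_perp hm] at hcg
        norm_num at hcg
      obtain ⟨u3, hu3, hτ3, hppc⟩ := scale_mem_Bset hKsf hzp hcM
      have h4 : ⟪c, l⟫ = ⟪c, t0 s⟫ * ⟪u3, l⟫ := by
        rw [← pp_inner hlM c, hppc, real_inner_smul_left]
      rw [inner_sub_right, real_inner_smul_right, hlamRm, h4] at hcg
      have h5 : ⟪u3, l⟫ ≤ lamC := hmax2 hu3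
      nlinarith
    have hbaduniq : ∀ R ∈ MinF s,
        (∀ p ∈ Ks (TsF s R), ⟪p, l - ⟪uf R, l⟫ • t0 s⟫ ≤ 0) → R = Rm := by
      intro R hR hneg
      by_contra hne'
      have h1 : ⟪uf Rm, l⟫ ≤ ⟪uf R, l⟫ := by
        have h2 := hneg (uf Rm) (Ks_anti (TsF_subset _ _) (face_subset (hminface Rm hRm) (hufB Rm hRm).1.1))
        rw [inner_sub_right, real_inner_smul_right, Bset_t0 (hufB Rm hRm)] at h2
        linarith
      have h3 : ⟪uf R, l⟫ ≤ ⟪uf Rm, l⟫ := by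
        have h2 := hbadRm (uf R) (Ks_anti (TsF_subset _ _) (face_subset (hminface R hR) (hufB R hR).1.1))
        rw [inner_sub_right, real_inner_smul_right, Bset_t0 (hufB R hR)] at h2
        linarith
      exact hlgen R hR Rm hRm hne' (le_antisymm h3 h1)
    have hsum2 : ∑ R ∈ MinF s, sig (TsF s R) (l - ⟪uf R, l⟫ • t0 s)
        = (-1:ℝ)^(sdim (perpS s) + 1) := by
      rw [Finset.sum_eq_single_of_mem Rm hRm ?_]
      · exact hbadeval Rm hRm hbadRm
      · intro R hR hne'
        rcases em (∃ p ∈ Ks (TsF s R), 0 < ⟪p, l - ⟪uf R, l⟫ • t0 s⟫) with hyes | hno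
        · exact hgoodeval R hR hyes
        · push_neg at hno
          exact absurd (hbaduniq R hR hno) hne'
    rw [hsum, hsum2, pow_succ]
    ring
  intro s hd
  refine ⟨hPE s hd, ?_⟩
  intro g hpos
  obtain ⟨q, hqK, hqg⟩ := hpos
  by_cases hsub : perpS s ⊆ Hz g
  swap
  · exact sig_empty_of_not_sub hsub
  have hperpins : perpS (insert g s) = perpS s := perpS_insert hsub
  have hpSubins : pSub (insert g s) = pSub s :=
    SetLike.coe_injective (by rw [pSub_coe, pSub_coe, hperpins])
  have hqins : q ∈ Ks (insert g s) := by
    rw [Ks_insert]; exact ⟨hqK, le_of_lt hqg⟩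
  have hKne : Ks (insert g s) ≠ perpS (insert g s) := by
    intro heq
    have h1 : q ∈ perpS (insert g s) := heq ▸ hqins
    have h2 : ⟪q, g⟫ = 0 := h1 g (Finset.mem_insert_self g s)
    linarith
  have hdins : Module.finrank ℝ (Submodule.span ℝ (Ks (insert g s)))
      ≤ d + Module.finrank ℝ (pSub (insert g s)) := by
    have h1 : Module.finrank ℝ (Submodule.span ℝ (Ks (insert g s)))
        ≤ Module.finrank ℝ (Submodule.span ℝ (Ks s)) :=
      Submodule.finrank_mono (Submodule.span_mono (Ks_anti (Finset.subset_insert g s)))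
    rw [hpSubins]
    omega
  have hd1 : 1 ≤ d := by
    have h1 := rank_lb_of_ne hKne
    rw [hpSubins] at h1 hdins
    omega
  rw [sig_insert hsub]
  -- compute chi (insert g s) via the fibration over faces in the hyperplane
  have hKsub : Ks (insert g s) ⊆ Hp g := fun v hv => hv g (Finset.mem_insert_self g s)
  have hchi : chi (insert g s) = ∑ H ∈ (Fas (insert g s)).filter (fun H => H ⊆ Hz g),
      sig (TsF (insert g s) H) g := by
    have h0 : chi (insert g s)
        = ∑ F ∈ (Fas (insert g s)).filter (fun F => F ⊆ Hp g), (-1:ℝ)^(sdim F) := by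
      rw [chi, faces_subset_Hp_of_Ks hKsub]
    rw [h0, partition_sum]
    apply Finset.sum_congr rfl
    intro H hHm
    rcases Finset.mem_filter.1 hHm with ⟨hH1, hH2⟩
    exact loc_sum (isFace_iff_mem_Fas.2 hH1) hH2
  have hchi0 : chi (insert g s) = 0 := hPE (insert g s) hdins hKne
  have hM'mem : perpS (insert g s) ∈ (Fas (insert g s)).filter (fun H => H ⊆ Hz g) := by
    refine Finset.mem_filter.2 ⟨isFace_iff_mem_Fas.1 (Mf_isFace _), ?_⟩
    rw [hperpins]; exact hsub
  have hzero : ∀ H ∈ (Fas (insert g s)).filter (fun H => H ⊆ Hz g),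
      H ≠ perpS (insert g s) → sig (TsF (insert g s) H) g = 0 := by
    intro H hHm hHne
    rcases Finset.mem_filter.1 hHm with ⟨hH1, hH2⟩
    have hHf : IsFaceOf H (Ks (insert g s)) := isFace_iff_mem_Fas.2 hH1
    have hMH : perpS (insert g s) ⊂ H :=
      lt_of_le_of_ne (Mf_subset_face hHf) (Ne.symm hHne)
    have h1 : Module.finrank ℝ (Submodule.span ℝ (Ks (TsF (insert g s) H)))
        ≤ Module.finrank ℝ (Submodule.span ℝ (Ks (insert g s))) :=
      Submodule.finrank_mono (span_loc_le hHf)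
    have h2 : Module.finrank ℝ (pSub (TsF (insert g s) H)) = sdim H := (sdim_face hHf).symm
    have h3 : Module.finrank ℝ (pSub (insert g s)) + 1 ≤ sdim H := by
      have h4 := sdim_lt_of_face_ssub hHf (Mf_isFace _) hMH
      rw [sdim_Mf] at h4
      omega
    have hbound : Module.finrank ℝ (Submodule.span ℝ (Ks (TsF (insert g s) H)))
        ≤ (d - 1) + Module.finrank ℝ (pSub (TsF (insert g s) H)) := by
      omega
    exact (IH (d - 1) (by omega) _ hbound).2 g
      ⟨q, Ks_anti (TsF_subset _ _) hqins, hqg⟩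
  have hcollapse : chi (insert g s) = sig (TsF (insert g s) (perpS (insert g s))) g := by
    rw [hchi]
    exact Finset.sum_eq_single_of_mem _ hM'mem hzero
  rw [TsF_Mf] at hcollapse
  rw [← hcollapse, hchi0]

/- ## intrinsic interior bridges -/

lemma intrinsic_push {S : Set V} {z u : V} (hz : z ∈ intrinsicInterior ℝ S) (hu : u ∈ S) :
    ∃ ε : ℝ, 0 < ε ∧ z + ε • (z - u) ∈ S := by
  rw [mem_intrinsicInterior] at hz
  obtain ⟨y, hy, hyz⟩ := hz
  have hzS : z ∈ affineSpan ℝ S := by rw [← hyz]; exact y.2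
  have huS : u ∈ affineSpan ℝ S := subset_affineSpan ℝ S hu
  have hmem : ∀ ε : ℝ, z + ε • (z - u) ∈ affineSpan ℝ S := by
    intro ε
    have := AffineSubspace.smul_vsub_vadd_mem (affineSpan ℝ S) ε hzS huS hzS
    simpa [vsub_eq_sub, vadd_eq_add, add_comm] using this
  set f : ℝ → (affineSpan ℝ S : Set V) := fun ε => ⟨z + ε • (z - u), hmem ε⟩ with hf
  have hcont : Continuous f := by
    apply Continuous.subtype_mk
    continuity
  have hf0 : f 0 = y := by
    apply Subtype.ext
    simp only [hf, zero_smul, add_zero]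
    exact hyz.symm
  have hopen : IsOpen (f ⁻¹' interior (((↑) : (affineSpan ℝ S : Set V) → V) ⁻¹' S)) :=
    isOpen_interior.preimage hcont
  have h0mem : (0:ℝ) ∈ f ⁻¹' interior (((↑) : (affineSpan ℝ S : Set V) → V) ⁻¹' S) := by
    simp only [Set.mem_preimage, hf0]
    exact hy
  obtain ⟨δ, hδ, hball⟩ := Metric.isOpen_iff.1 hopen 0 h0mem
  refine ⟨δ/2, by positivity, ?_⟩
  have hmb : (δ/2 : ℝ) ∈ Metric.ball (0:ℝ) δ := by
    rw [Metric.mem_ball, Real.dist_eq, sub_zero, abs_of_pos (by positivity)]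
    linarith
  have h2 := hball hmb
  simp only [Set.mem_preimage] at h2
  have h3 : f (δ/2) ∈ Subtype.val ⁻¹' S := interior_subset h2
  exact h3

lemma intrinsic_criterion {S : Set V} {z : V} {δ : ℝ} (hδ : 0 < δ) (hz : z ∈ S)
    (h : ∀ w : V, w ∈ (affineSpan ℝ S).direction → ‖w‖ < δ → z + w ∈ S) :
    z ∈ intrinsicInterior ℝ S := by
  rw [mem_intrinsicInterior]
  refine ⟨⟨z, subset_affineSpan ℝ S hz⟩, ?_, rfl⟩
  apply mem_interior.2
  refine ⟨Metric.ball ⟨z, subset_affineSpan ℝ S hz⟩ δ, ?_, Metric.isOpen_ball,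
    Metric.mem_ball_self hδ⟩
  intro y' hy'
  simp only [Set.mem_preimage]
  have hdist : ‖(y' : V) - z‖ < δ := by
    have := hy'
    rw [Metric.mem_ball, Subtype.dist_eq, dist_eq_norm] at this
    exact this
  have hdir : (y' : V) - z ∈ (affineSpan ℝ S).direction := by
    have := AffineSubspace.vsub_mem_direction y'.2 (subset_affineSpan ℝ S hz)
    simpa [vsub_eq_sub] using this
  have := h _ hdir hdist
  have he : z + ((y' : V) - z) = (y' : V) := by abel
  rwa [he] at this

lemma direction_span_zero {S : Set V} (h0 : (0:V) ∈ S) :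
    (affineSpan ℝ S).direction = Submodule.span ℝ S := by
  rw [direction_affineSpan, vectorSpan_def]
  apply le_antisymm
  · rw [Submodule.span_le]
    rintro v ⟨a, ha, b, hb, rfl⟩
    exact Submodule.sub_mem _ (Submodule.subset_span ha) (Submodule.subset_span hb)
  · rw [Submodule.span_le]
    intro a ha
    have : a -ᵥ (0:V) ∈ S -ᵥ S := Set.vsub_mem_vsub ha h0
    rw [vsub_eq_sub, sub_zero] at this
    exact Submodule.subset_span this

/- ## dual cone characterization -/

lemma mem_dualCone {C : Set V} {v : V} : v ∈ dualCone C ↔ ∀ c ∈ C, 0 ≤ ⟪v, c⟫ := Iff.rfl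

lemma s_subset_dual (s : Finset V) : ∀ t ∈ s, t ∈ dualCone (Ks s) := by
  intro t ht c hc
  rw [real_inner_comm]
  exact hc t ht

lemma dual_zero (s : Finset V) : (0:V) ∈ dualCone (Ks s) := by
  intro c _; simp

lemma dual_perp_M {s : Finset V} {v : V} (hv : v ∈ dualCone (Ks s)) :
    ∀ m ∈ perpS s, ⟪v, m⟫ = 0 := by
  intro m hm
  have h1 := hv m (perpS_subset_Ks hm)
  have h2 := hv (-m) (perpS_subset_Ks (perpS_neg hm))
  rw [inner_neg_right] at h2
  linarith

lemma dual_span_le (s : Finset V) :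
    Submodule.span ℝ (dualCone (Ks s)) ≤ (pSub s)ᗮ := by
  rw [Submodule.span_le]
  intro v hv
  rw [SetLike.mem_coe, Submodule.mem_orthogonal]
  intro m hm
  rw [real_inner_comm]
  exact dual_perp_M hv m hm

lemma pos_bound {s : Finset V} {b : V}
    (hbpos : ∀ v ∈ Ks s, v ∈ ((pSub s)ᗮ : Set V) → v ≠ 0 → 0 < ⟪v, b⟫) :
    ∃ m0 : ℝ, 0 < m0 ∧ ∀ v ∈ Ks s, v ∈ ((pSub s)ᗮ : Set V) → m0 * ‖v‖ ≤ ⟪v, b⟫ := by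
  classical
  set K0 : Set V := Ks s ∩ ((pSub s)ᗮ : Set V) ∩ Metric.sphere (0:V) 1 with hK0
  have hK0closed : IsClosed K0 := (((isClosed_Ks s).inter
    (Submodule.closed_of_finiteDimensional _)).inter Metric.isClosed_sphere)
  have hK0cpt : IsCompact K0 := Metric.isCompact_of_isClosed_isBounded hK0closed
    (Bornology.IsBounded.subset Metric.isBounded_sphere Set.inter_subset_right)
  by_cases hne : K0.Nonempty
  · obtain ⟨x0, hx0, hmin⟩ := hK0cpt.exists_isMinOn hne
      ((Continuous.inner continuous_id continuous_const).continuousOn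
        (f := fun v : V => ⟪v, b⟫))
    have hx0ne : x0 ≠ 0 := by
      intro h
      have := hx0.2
      rw [h] at this
      simp at this
    have hmpos : 0 < ⟪x0, b⟫ := hbpos x0 hx0.1.1 hx0.1.2 hx0ne
    refine ⟨⟪x0, b⟫, hmpos, ?_⟩
    intro v hv hvp
    by_cases hv0 : v = 0
    · simp [hv0]
    · have hvs : ‖v‖⁻¹ • v ∈ K0 := by
        refine ⟨⟨Ks_smul (by positivity) hv, Submodule.smul_mem _ _ hvp⟩, ?_⟩
        simp [norm_smul, abs_inv, abs_norm, inv_mul_cancel₀ (norm_ne_zero_iff.2 hv0)]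
      have h3 : ⟪x0, b⟫ ≤ ⟪‖v‖⁻¹ • v, b⟫ := hmin hvs
      rw [real_inner_smul_left] at h3
      have h5 : 0 < ‖v‖ := norm_pos_iff.2 hv0
      have h6 := mul_le_mul_of_nonneg_left h3 (le_of_lt h5)
      rw [← mul_assoc, mul_inv_cancel₀ (ne_of_gt h5), one_mul] at h6
      linarith [h6]
  · refine ⟨1, one_pos, ?_⟩
    intro v hv hvp
    by_cases hv0 : v = 0
    · simp [hv0]
    · exact absurd ⟨‖v‖⁻¹ • v, ⟨Ks_smul (by positivity) hv, Submodule.smul_mem _ _ hvp⟩,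
        by simp [norm_smul, abs_inv, abs_norm, inv_mul_cancel₀ (norm_ne_zero_iff.2 hv0)]⟩ hne

/-- characterization of `-y` being in the relative interior of the dual cone -/
lemma relint_char {s : Finset V} {y : V} :
    -y ∈ intrinsicInterior ℝ (dualCone (Ks s)) ↔
      (∀ c ∈ Ks s, ⟪c, y⟫ ≤ 0) ∧ Ks s ∩ Hz y = perpS s := by
  constructor
  · intro hz
    have hmem : -y ∈ dualCone (Ks s) := intrinsicInterior_subset hz
    have hyneg : ∀ c ∈ Ks s, ⟪c, y⟫ ≤ 0 := by
      intro c hc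
      have := hmem c hc
      rw [inner_neg_left, real_inner_comm] at this
      linarith
    refine ⟨hyneg, ?_⟩
    have hyM : ∀ m ∈ perpS s, ⟪m, y⟫ = 0 := by
      intro m hm
      have h1 := hyneg m (perpS_subset_Ks hm)
      have h2 := hyneg (-m) (perpS_subset_Ks (perpS_neg hm))
      rw [inner_neg_left] at h2
      linarith
    apply Set.Subset.antisymm
    · rintro c ⟨hc, hcz⟩
      by_contra hcM
      have hex : ∃ t ∈ s, 0 < ⟪c, t⟫ := by
        by_contra hcon
        push_neg at hcon
        exact hcM (fun t ht => le_antisymm (hcon t ht) (hc t ht))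
      obtain ⟨t₁, ht₁, hct₁⟩ := hex
      obtain ⟨ε, hε, hpush⟩ := intrinsic_push hz (s_subset_dual s t₁ ht₁)
      have := hpush c hc
      rw [inner_add_left, real_inner_smul_left, inner_sub_left, inner_neg_left] at this
      have hyc : ⟪y, c⟫ = 0 := by rw [real_inner_comm]; exact hcz
      rw [hyc] at this
      have htc : ⟪t₁, c⟫ = ⟪c, t₁⟫ := real_inner_comm c t₁
      rw [htc] at this
      nlinarith
    · intro m hm
      exact ⟨perpS_subset_Ks hm, hyM m hm⟩
  · rintro ⟨hyneg, hGM⟩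
    have hyM : ∀ m ∈ perpS s, ⟪m, y⟫ = 0 := by
      intro m hm
      have h1 := hyneg m (perpS_subset_Ks hm)
      have h2 := hyneg (-m) (perpS_subset_Ks (perpS_neg hm))
      rw [inner_neg_left] at h2
      linarith
    have hmem : -y ∈ dualCone (Ks s) := by
      intro c hc
      rw [inner_neg_left, real_inner_comm]
      linarith [hyneg c hc]
    have hbpos : ∀ v ∈ Ks s, v ∈ ((pSub s)ᗮ : Set V) → v ≠ 0 → 0 < ⟪v, -y⟫ := by
      intro v hv hvp hv0
      rw [inner_neg_right]
      rcases lt_or_eq_of_le (hyneg v hv) with h | h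
      · linarith
      · exfalso
        have : v ∈ perpS s := by rw [← hGM]; exact ⟨hv, h⟩
        exact hv0 (mem_pm_zero this hvp)
    obtain ⟨m0, hm0, hbd⟩ := pos_bound hbpos
    apply intrinsic_criterion hm0 hmem
    intro w hw hwn
    have hwM : w ∈ (pSub s)ᗮ := by
      have h1 : (affineSpan ℝ (dualCone (Ks s))).direction
          = Submodule.span ℝ (dualCone (Ks s)) := direction_span_zero (dual_zero s)
      rw [h1] at hw
      exact dual_span_le s hw
    intro c hc
    -- decompose c
    have hqK : pp s c ∈ Ks s := by
      rw [pp, sub_eq_add_neg]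
      exact Ks_add hc (perpS_subset_Ks (perpS_neg
        (SetLike.coe_mem (Submodule.orthogonalProjectionOnto (pSub s) c))))
    have hqp : pp s c ∈ ((pSub s)ᗮ : Set V) := pp_mem_orth s c
    have hsplit : ⟪-y + w, c⟫ = ⟪-y + w, pp s c⟫ := by
      have hm : (Submodule.orthogonalProjectionOnto (pSub s) c : V) ∈ perpS s :=
        SetLike.coe_mem (Submodule.orthogonalProjectionOnto (pSub s) c)
      have h2 : ⟪-y + w, (Submodule.orthogonalProjectionOnto (pSub s) c : V)⟫ = 0 := by
        rw [inner_add_left, inner_neg_left]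
        have h3 : ⟪y, (Submodule.orthogonalProjectionOnto (pSub s) c : V)⟫ = 0 := by
          rw [real_inner_comm]; exact hyM _ hm
        have h4 : ⟪w, (Submodule.orthogonalProjectionOnto (pSub s) c : V)⟫ = 0 := by
          rw [real_inner_comm]
          exact (Submodule.mem_orthogonal _ _).1 hwM _ hm
        rw [h3, h4]; ring
      calc ⟪-y + w, c⟫ = ⟪-y + w, (Submodule.orthogonalProjectionOnto (pSub s) c : V) + pp s c⟫ := by
            rw [pp]; congr 1; abel
        _ = ⟪-y + w, pp s c⟫ := by rw [inner_add_right, h2, zero_add]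
    rw [hsplit, inner_add_left]
    have hb1 : m0 * ‖pp s c‖ ≤ ⟪pp s c, -y⟫ := hbd _ hqK hqp
    have hb2 : -(‖w‖ * ‖pp s c‖) ≤ ⟪w, pp s c⟫ := by
      have := real_inner_le_norm (-w) (pp s c)
      rw [inner_neg_left, norm_neg] at this
      linarith
    have hb3 : ⟪-y, pp s c⟫ = ⟪pp s c, -y⟫ := real_inner_comm _ _
    rw [hb3]
    have hnn : 0 ≤ ‖pp s c‖ := norm_nonneg _
    nlinarith

/- ## final assembly -/

lemma ind_of_mem {S : Set V} {v : V} (h : v ∈ S) : ind S v = 1 := by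
  rw [ind, Set.indicator_of_mem h]; rfl

lemma ind_of_not_mem {S : Set V} {v : V} (h : v ∉ S) : ind S v = 0 := by
  rw [ind, Set.indicator_of_notMem h]

lemma Ks_convex (s : Finset V) : Convex ℝ (Ks s) := by
  intro a ha b hb p q hp hq hpq
  exact Ks_add (Ks_smul hp ha) (Ks_smul hq hb)

lemma face_convex {s : Finset V} {F : Set V} (hF : IsFaceOf F (Ks s)) : Convex ℝ F := by
  obtain ⟨w, hw, rfl⟩ := hF
  exact (Ks_convex s).inter ((zSub w).convex)

lemma mem_angleCone {s : Finset V} {F : Set V} {x : V} (hF : IsFaceOf F (Ks s))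
    (hx : x ∈ Ks s) : x ∈ angleCone F (Ks s) := by
  obtain ⟨z₀, hz₀⟩ := Set.Nonempty.intrinsicInterior (face_convex hF) ⟨0, face_zero hF⟩
  have hz₀F : z₀ ∈ F := intrinsicInterior_subset hz₀
  refine ⟨1, one_pos, x + z₀, Ks_add hx (face_subset hF hz₀F), z₀, hz₀, ?_⟩
  rw [one_smul]; abel

lemma angleCone_Mf (s : Finset V) : angleCone (perpS s) (Ks s) = Ks s := by
  apply Set.Subset.antisymm
  · rintro w ⟨a, ha, x, hx, z, hz, rfl⟩
    have hzM : z ∈ perpS s := intrinsicInterior_subset hz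
    rw [smul_sub, sub_eq_add_neg, ← smul_neg]
    exact Ks_add (Ks_smul (le_of_lt ha) hx) (perpS_subset_Ks (perpS_smul a (perpS_neg hzM)))
  · intro c hc
    exact mem_angleCone (Mf_isFace s) hc

lemma mem_dual_iff_Hp {F : Set V} {y : V} : y ∈ dualCone F ↔ F ⊆ Hp y := by
  constructor
  · intro h f hf
    have := h f hf
    rw [real_inner_comm] at this
    exact this
  · intro h f hf
    have := h hf
    rw [real_inner_comm]
    exact this

lemma polyCone_Ks {C : Set V} (h : IsPolyCone C) : ∃ s : Finset V, C = Ks s := by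
  obtain ⟨s, rfl⟩ := h
  refine ⟨s, ?_⟩
  ext v
  simp only [Set.mem_iInter, Set.mem_setOf_eq, Ks]

lemma minimal_eq_Mf {s : Finset V} {F₀ : Set V} (h₀ : IsMinimalFace F₀ (Ks s)) :
    F₀ = perpS s :=
  Set.Subset.antisymm (h₀.2 (perpS s) (Mf_isFace s)) (Mf_subset_face h₀.1)

theorem stmt11 (C F₀ : Set V) (hC : IsPolyCone C) (h₀ : IsMinimalFace F₀ C) (x y : V)
    (h : y ∈ -(intrinsicInterior ℝ (dualCone C)) ∨ x ∈ C) :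
    Γ C x y = (-1 : ℝ) ^ sdim F₀ * ind C x * ind (-(intrinsicInterior ℝ (dualCone C))) y := by
  classical
  obtain ⟨s, rfl⟩ := polyCone_Ks hC
  have hF₀ : F₀ = perpS s := minimal_eq_Mf h₀
  subst hF₀
  have hMmem : perpS s ∈ Fas s := isFace_iff_mem_Fas.1 (Mf_isFace s)
  have hΓ : Γ (Ks s) x y = ∑ F ∈ Fas s,
      (-1:ℝ)^(sdim F) * ind (angleCone F (Ks s)) x * ind (dualCone F) y := by
    rw [Γ]
    rw [show {F : Set V | IsFaceOf F (Ks s)} = ↑(Fas s) from Set.ext (fun F => by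
      simpa using (isFace_iff_mem_Fas (F := F) (s := s)))]
    exact finsum_mem_coe_finset _ _
  by_cases hy : y ∈ -(intrinsicInterior ℝ (dualCone (Ks s)))
  · -- main case 1 : y in the negative relative interior of the dual cone
    have hyint : -y ∈ intrinsicInterior ℝ (dualCone (Ks s)) := by rwa [Set.mem_neg] at hy
    obtain ⟨hyneg, hGM⟩ := relint_char.1 hyint
    have hyM : ∀ m ∈ perpS s, ⟪m, y⟫ = 0 := by
      intro m hm
      have h1 := hyneg m (perpS_subset_Ks hm)
      have h2 := hyneg (-m) (perpS_subset_Ks (perpS_neg hm))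
      rw [inner_neg_left] at h2
      linarith
    rw [hΓ, Finset.sum_eq_single_of_mem (perpS s) hMmem ?_]
    · rw [angleCone_Mf]
      have h1 : ind (dualCone (perpS s)) y = 1 := by
        apply ind_of_mem
        intro f hf
        rw [real_inner_comm, hyM f hf]
      have h2 : ind (-(intrinsicInterior ℝ (dualCone (Ks s)))) y = 1 := ind_of_mem hy
      rw [h1, h2, mul_one]
    · intro F hFm hFne
      have hFf := isFace_iff_mem_Fas.2 hFm
      have hnd : y ∉ dualCone F := by
        intro hyd
        apply hFne
        apply Set.Subset.antisymm
        · intro f hf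
          have h3 : 0 ≤ ⟪y, f⟫ := hyd f hf
          rw [real_inner_comm] at h3
          have h4 : ⟪f, y⟫ ≤ 0 := hyneg f (face_subset hFf hf)
          have h5 : f ∈ Ks s ∩ Hz y := ⟨face_subset hFf hf, le_antisymm h4 h3⟩
          rw [hGM] at h5
          exact h5
        · exact Mf_subset_face hFf
      rw [ind_of_not_mem hnd, mul_zero]
  · -- main case 2 : x ∈ C
    have hx : x ∈ Ks s := h.resolve_left hy
    rw [hΓ, ind_of_not_mem hy, mul_zero]
    have hsum : ∑ F ∈ Fas s, (-1:ℝ)^(sdim F) * ind (angleCone F (Ks s)) x * ind (dualCone F) y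
        = ∑ F ∈ (Fas s).filter (fun F => F ⊆ Hp y), (-1:ℝ)^(sdim F) := by
      rw [Finset.sum_filter]
      apply Finset.sum_congr rfl
      intro F hFm
      have hFf := isFace_iff_mem_Fas.2 hFm
      rw [ind_of_mem (mem_angleCone hFf hx), mul_one]
      by_cases hFy : F ⊆ Hp y
      · rw [if_pos hFy, ind_of_mem (mem_dual_iff_Hp.2 hFy), mul_one]
      · rw [if_neg hFy, ind_of_not_mem (fun hc => hFy (mem_dual_iff_Hp.1 hc)), mul_zero]
    rw [hsum]
    have hnotrel : ¬ ((∀ c ∈ Ks s, ⟪c, y⟫ ≤ 0) ∧ Ks s ∩ Hz y = perpS s) := by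
      intro hcontr
      exact hy (Set.mem_neg.2 (relint_char.2 hcontr))
    by_cases hcase : ∃ c ∈ Ks s, 0 < ⟪c, y⟫
    · obtain ⟨c, hcK, hcy⟩ := hcase
      rw [partition_sum]
      apply Finset.sum_eq_zero
      intro H hHm
      rcases Finset.mem_filter.1 hHm with ⟨hH1, hH2⟩
      rw [loc_sum (isFace_iff_mem_Fas.2 hH1) hH2]
      exact (main_ind (Module.finrank ℝ (Submodule.span ℝ (Ks (TsF s H)))) _
        (Nat.le_add_right _ _)).2 y ⟨c, Ks_anti (TsF_subset _ _) hcK, hcy⟩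
    · push_neg at hcase
      have hGne : Ks s ∩ Hz y ≠ perpS s := fun he => hnotrel ⟨hcase, he⟩
      have hyMsub : perpS s ⊆ Hz y := by
        intro m hm
        have h1 := hcase m (perpS_subset_Ks hm)
        have h2 := hcase (-m) (perpS_subset_Ks (perpS_neg hm))
        rw [inner_neg_left] at h2
        exact le_antisymm h1 (by linarith)
      have hfe : (Fas s).filter (fun F => F ⊆ Hp y) = Fas (insert y s) := by
        apply Finset.ext
        intro F
        simp only [Finset.mem_filter]
        constructor
        · rintro ⟨hFm, h1⟩
          have hFf := isFace_iff_mem_Fas.2 hFm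
          rw [← isFace_iff_mem_Fas]
          obtain ⟨w, hw, hFw⟩ := hFf
          refine ⟨w, fun v hv => hw (((Ks_insert y s) ▸ hv).1), ?_⟩
          rw [Ks_insert]
          ext v
          constructor
          · intro hv
            have hv' := hFw ▸ hv
            exact ⟨⟨hv'.1, h1 hv⟩, hv'.2⟩
          · rintro ⟨⟨hvK, _⟩, hvz⟩
            rw [hFw]; exact ⟨hvK, hvz⟩
        · intro hFm
          have hFf := isFace_iff_mem_Fas.2 hFm
          have hsubHp : F ⊆ Hp y :=
            fun f hf => (face_subset hFf hf) y (Finset.mem_insert_self y s)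
          refine ⟨?_, hsubHp⟩
          set T := TsF (insert y s) F with hT
          have hFT : F = faceT (insert y s) T := face_eq_faceT hFf
          have hTs : T.erase y ⊆ s := by
            intro t ht
            rcases Finset.mem_insert.1 (TsF_subset _ _ (Finset.erase_subset _ _ ht)) with h' | h'
            · exact absurd h' (Finset.ne_of_mem_erase ht)
            · exact h'
          have hFeq : F = Ks s ∩ (perpS (T.erase y) ∩ Hz y) := by
            rw [hFT, faceT, Ks_insert]
            ext v
            constructor
            · rintro ⟨⟨hvK, hvp⟩, hvperp⟩
              refine ⟨hvK, ?_, le_antisymm (hcase v hvK) hvp⟩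
              intro t ht
              exact hvperp t (Finset.erase_subset _ _ ht)
            · rintro ⟨hvK, hvpe, hvz⟩
              refine ⟨⟨hvK, le_of_eq hvz.symm⟩, ?_⟩
              intro t ht
              by_cases hty : t = y
              · rw [hty]; exact hvz
              · exact hvpe t (Finset.mem_erase.2 ⟨hty, ht⟩)
          rw [← isFace_iff_mem_Fas]
          refine ⟨(∑ t ∈ T.erase y, t) - y, ?_, ?_⟩
          · intro v hv
            simp only [Set.mem_setOf_eq, inner_sub_right, inner_sum]
            have h1 : 0 ≤ ∑ t ∈ T.erase y, ⟪v, t⟫ :=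
              Finset.sum_nonneg (fun t ht => hv t (hTs ht))
            have h2 : ⟪v, y⟫ ≤ 0 := hcase v hv
            linarith
          · rw [hFeq]
            ext v
            simp only [Set.mem_inter_iff, Set.mem_setOf_eq, inner_sub_right, inner_sum,
              perpS, Hz]
            constructor
            · rintro ⟨hvK, hvpe, hvz⟩
              refine ⟨hvK, ?_⟩
              rw [Finset.sum_eq_zero (fun t ht => hvpe t ht), hvz]
              ring
            · rintro ⟨hvK, hvs⟩
              have h1 : ∀ t ∈ T.erase y, 0 ≤ ⟪v, t⟫ := fun t ht => hvK t (hTs ht)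
              have h2 : 0 ≤ -⟪v, y⟫ := by linarith [hcase v hvK]
              have h3 : 0 ≤ ∑ t ∈ T.erase y, ⟪v, t⟫ := Finset.sum_nonneg h1
              have hsz1 : ∑ t ∈ T.erase y, ⟪v, t⟫ = 0 := by linarith
              have hsz2 : ⟪v, y⟫ = 0 := by linarith
              exact ⟨hvK, fun t ht => (Finset.sum_eq_zero_iff_of_nonneg h1).1 hsz1 t ht, hsz2⟩
      rw [hfe]
      have hKins : Ks (insert y s) = Ks s ∩ Hz y := by
        rw [Ks_insert]
        ext v
        constructor
        · rintro ⟨hv, hp⟩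
          exact ⟨hv, le_antisymm (hcase v hv) hp⟩
        · rintro ⟨hv, hz⟩
          exact ⟨hv, le_of_eq hz.symm⟩
      have hchi0 := (main_ind (Module.finrank ℝ (Submodule.span ℝ (Ks (insert y s))))
        (insert y s) (Nat.le_add_right _ _)).1
        (by rw [hKins, perpS_insert hyMsub]; exact hGne)
      rw [chi] at hchi0
      exact hchi0
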